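/- arXiv:2401.04272 — 5 statements merged into one kernel-verified Lean document; each statement's English description precedes it below -/
import Mathlib

section
/- The distributional LS-category is a homotopy invariant: if a space X homotopy dominates a space Y (i.e., there exist continuous maps f : X → Y and g : Y → X with f ∘ g homotopic to the identity of Y), then dcat(Y) ≤ dcat(X). In particular, homotopy equivalent spaces have equal dcat. -/
open MeasureTheory unitInterval

noncomputable section

/-- The path space `P(X)`: all continuous maps `[0,1] → X`, with the compact-open topology. -/
abbrev PathSp (X : Type*) [TopologicalSpace X] := C(unitInterval, X)

noncomputable instance (X : Type*) [TopologicalSpace X] : MeasurableSpace (PathSp X) := borel _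
instance (X : Type*) [TopologicalSpace X] : BorelSpace (PathSp X) := ⟨rfl⟩

/-- `μ` is a probability measure supported on at most `k` paths from `x` to `y`. -/
def DistPaths {X : Type*} [TopologicalSpace X] (k : ℕ) (x y : X)
    (μ : ProbabilityMeasure (PathSp X)) : Prop :=
  ∃ S : Finset (PathSp X), S.card ≤ k ∧ (∀ φ ∈ S, φ 0 = x ∧ φ 1 = y) ∧
    (μ : Measure (PathSp X)) ((↑S : Set (PathSp X))ᶜ) = 0

/-- The distributional LS-category: the minimal `k` such that `X` admits a
`(k+1)`-distributed contraction to a point. -/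
def dcat (X : Type*) [TopologicalSpace X] : ℕ∞ :=
  sInf {c : ℕ∞ | ∃ k : ℕ, c = k ∧ ∃ (x0 : X) (H : C(X, ProbabilityMeasure (PathSp X))),
    ∀ x, DistPaths (k + 1) x x0 (H x)}

/-- The distributional topological complexity: the minimal `n` such that `X` admits an
`(n+1)`-distributed navigation algorithm. -/
def dTC (X : Type*) [TopologicalSpace X] : ℕ∞ :=
  sInf {c : ℕ∞ | ∃ n : ℕ, c = n ∧ ∃ s : C(X × X, ProbabilityMeasure (PathSp X)),
    ∀ x y, DistPaths (n + 1) x y (s (x, y))}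

end

section Auxiliary

open MeasureTheory Filter Topology Set unitInterval

open Classical in
lemma measurable_finset_modify {α β : Type*} [MeasurableSpace α] [MeasurableSingletonClass α]
    [MeasurableSpace β] (S : Finset α) (u : α → β) (c : β) :
    Measurable (fun a => if a ∈ S then u a else c) := by
  induction S using Finset.induction_on with
  | empty => simpa using measurable_const
  | @insert a S ha ih =>
    have : (fun x => if x ∈ insert a S then u x else c)
        = fun x => if x = a then u a else (if x ∈ S then u x else c) := by
      ext x
      by_cases hx : x = a
      · simp [hx]
      · simp [hx]
    rw [this]
    exact Measurable.ite (by simpa using MeasurableSet.singleton a) measurable_const ih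

/-- The key continuity lemma: pushing forward a continuously varying finitely-supported
probability measure along a family of maps which, on the (finite) supports, agree with a
globally continuous map defined on a closed set, is continuous. -/
lemma continuous_pushforward_of_finite_support
    {Y Z W : Type*} [MetricSpace Y] [MetricSpace Z] [MetricSpace W]
    [MeasurableSpace Z] [BorelSpace Z] [MeasurableSpace W] [BorelSpace W]
    (μ : C(Y, ProbabilityMeasure Z))
    {C : Set (Y × Z)} (hC : IsClosed C) (Ψ : C(C, W))
    (Φ : Y → Z → W) (hmeas : ∀ y, Measurable (Φ y))
    (hsupp : ∀ y, ∃ S : Finset Z,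
      (∀ z ∈ S, ∃ h : (y, z) ∈ C, Φ y z = Ψ ⟨(y, z), h⟩) ∧
      (μ y : Measure Z) ((↑S : Set Z)ᶜ) = 0) :
    Continuous (fun y => (μ y).map (hmeas y).aemeasurable) := by
  rw [continuous_iff_continuousAt]
  intro y₀
  unfold ContinuousAt
  rw [ProbabilityMeasure.tendsto_iff_forall_integral_tendsto]
  intro f
  -- Tietze extension of `f ∘ Ψ` to the whole product space
  obtain ⟨h, -, hres⟩ := BoundedContinuousFunction.exists_norm_eq_restrict_eq_of_closed
    (f.compContinuous Ψ) hC
  have key : ∀ y, ∫ w, f w ∂((μ y).map (hmeas y).aemeasurable : Measure W)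
      = ∫ z, h (y, z) ∂(μ y : Measure Z) := by
    intro y
    rw [ProbabilityMeasure.toMeasure_map,
      integral_map (hmeas y).aemeasurable f.continuous.aestronglyMeasurable]
    apply integral_congr_ae
    obtain ⟨S, hSψ, hS0⟩ := hsupp y
    have hae : ∀ᵐ z ∂(μ y : Measure Z), z ∈ (↑S : Set Z) := by
      rw [ae_iff]
      exact hS0
    filter_upwards [hae] with z hz
    obtain ⟨hmem, hΦ⟩ := hSψ z hz
    have h2 := congrFun (congrArg DFunLike.coe hres) ⟨(y, z), hmem⟩
    simp only [BoundedContinuousFunction.restrict_apply,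
      BoundedContinuousFunction.compContinuous_apply] at h2
    rw [hΦ, ← h2]
  simp only [key]
  rw [Metric.tendsto_nhds]
  intro ε hε
  set C₀ : ℝ := ‖h‖ with hC₀
  have hC₀0 : 0 ≤ C₀ := norm_nonneg _
  have habs : ∀ p : Y × Z, |h p| ≤ C₀ := fun p => h.norm_coe_le_norm p
  obtain ⟨S₀, hS₀ψ, hS₀0⟩ := hsupp y₀
  -- local uniform estimate near each support point
  have nb : ∀ s : Z, ∃ (V : Set Y) (U : Set Z), V ∈ 𝓝 y₀ ∧ IsOpen U ∧ s ∈ U ∧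
      ∀ y ∈ V, ∀ z ∈ U, |h (y, z) - h (y₀, z)| ≤ ε/4 := by
    intro s
    have hc : ContinuousAt (fun p : Y × Z => h p) (y₀, s) := h.continuous.continuousAt
    have hev : ∀ᶠ p in 𝓝 (y₀, s), |h p - h (y₀, s)| < ε/8 := by
      have := Metric.tendsto_nhds.mp hc (ε/8) (by positivity)
      simpa [Real.dist_eq] using this
    obtain ⟨V, hV, U', hU', hVU⟩ := mem_nhds_prod_iff.mp hev
    obtain ⟨U, hUsub, hUopen, hsU⟩ := mem_nhds_iff.mp hU'
    refine ⟨V, U, hV, hUopen, hsU, ?_⟩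
    intro y hy z hz
    have e1 : |h (y, z) - h (y₀, s)| < ε/8 := hVU (Set.mk_mem_prod hy (hUsub hz))
    have e2 : |h (y₀, z) - h (y₀, s)| < ε/8 := hVU (Set.mk_mem_prod (mem_of_mem_nhds hV) (hUsub hz))
    have e3 : |h (y, z) - h (y₀, z)| ≤ |h (y, z) - h (y₀, s)| + |h (y₀, s) - h (y₀, z)| :=
      abs_sub_le _ _ _
    rw [abs_sub_comm (h (y₀, s))] at e3
    linarith
  choose V U hV hUopen hsU hest using nb
  set Vall : Set Y := ⋂ s ∈ S₀, V s with hVdef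
  set Uall : Set Z := ⋃ s ∈ S₀, U s with hUalldef
  have hVallmem : Vall ∈ 𝓝 y₀ := (Filter.biInter_finset_mem S₀).mpr fun s _ => hV s
  have hUallopen : IsOpen Uall := isOpen_biUnion fun s _ => (hUopen s)
  have hUmeas : MeasurableSet Uall := hUallopen.measurableSet
  have hS₀U : (↑S₀ : Set Z) ⊆ Uall := fun z hz => Set.mem_biUnion hz (hsU z)
  have hcompl0 : (μ y₀ : Measure Z) Uallᶜ = 0 :=
    measure_mono_null (Set.compl_subset_compl.mpr hS₀U) hS₀0
  have hfull : (1 : ENNReal) ≤ (μ y₀ : Measure Z) Uall := by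
    calc (1 : ENNReal) = (μ y₀ : Measure Z) Set.univ := measure_univ.symm
      _ = (μ y₀ : Measure Z) (Uall ∪ Uallᶜ) := by rw [Set.union_compl_self]
      _ ≤ (μ y₀ : Measure Z) Uall + (μ y₀ : Measure Z) Uallᶜ := measure_union_le _ _
      _ = (μ y₀ : Measure Z) Uall := by rw [hcompl0, add_zero]
  -- portmanteau : mass of Uall stays close to 1
  have hμcont : Tendsto μ (𝓝 y₀) (𝓝 (μ y₀)) := μ.continuous.continuousAt
  have hlim : (1 : ENNReal) ≤ liminf (fun y => (μ y : Measure Z) Uall) (𝓝 y₀) :=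
    le_trans hfull (ProbabilityMeasure.le_liminf_measure_open_of_tendsto hμcont hUallopen)
  set δ : ℝ := min (ε / (8 * (C₀ + 1))) 1 with hδdef
  have hδpos : 0 < δ := lt_min (by positivity) one_pos
  have hδ1 : ENNReal.ofReal δ ≤ 1 := by
    rw [show (1 : ENNReal) = ENNReal.ofReal 1 from (ENNReal.ofReal_one).symm]
    exact ENNReal.ofReal_le_ofReal (min_le_right _ _)
  have hmass : ∀ᶠ y in 𝓝 y₀, (μ y : Measure Z) Uallᶜ ≤ ENNReal.ofReal δ := by
    have hlt : (1 : ENNReal) - ENNReal.ofReal δ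
        < liminf (fun y => (μ y : Measure Z) Uall) (𝓝 y₀) := by
      refine lt_of_lt_of_le ?_ hlim
      exact ENNReal.sub_lt_self ENNReal.one_ne_top one_ne_zero
        (by simpa [ENNReal.ofReal_eq_zero, not_le] using hδpos)
    filter_upwards [Filter.eventually_lt_of_lt_liminf hlt] with y hy
    rw [prob_compl_eq_one_sub hUmeas]
    refine tsub_le_iff_right.mpr ?_
    calc (1 : ENNReal) = (1 - ENNReal.ofReal δ) + ENNReal.ofReal δ :=
          (tsub_add_cancel_of_le hδ1).symm
      _ ≤ (μ y : Measure Z) Uall + ENNReal.ofReal δ := add_le_add_left hy.le _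
      _ = ENNReal.ofReal δ + (μ y : Measure Z) Uall := add_comm _ _
  -- second term: weak convergence against the fixed function h (y₀, ·)
  have hterm2 : Tendsto (fun y => ∫ z, h (y₀, z) ∂(μ y : Measure Z)) (𝓝 y₀)
      (𝓝 (∫ z, h (y₀, z) ∂(μ y₀ : Measure Z))) := by
    have hb := ProbabilityMeasure.continuous_integral_boundedContinuousFunction
      (X := Z) (h.compContinuous ⟨fun z => (y₀, z), continuous_const.prodMk continuous_id⟩)
    have := (hb.comp μ.continuous).continuousAt (x := y₀)
    simpa [ContinuousAt, BoundedContinuousFunction.compContinuous_apply, Function.comp_def] using this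
  have hterm2' : ∀ᶠ y in 𝓝 y₀,
      |(∫ z, h (y₀, z) ∂(μ y : Measure Z)) - ∫ z, h (y₀, z) ∂(μ y₀ : Measure Z)| < ε/4 := by
    have := Metric.tendsto_nhds.mp hterm2 (ε/4) (by positivity)
    simpa [Real.dist_eq] using this
  -- combine
  filter_upwards [hVallmem, hmass, hterm2'] with y hyV hymass hy2
  have int1 : Integrable (fun z => h (y, z)) (μ y : Measure Z) :=
    (h.compContinuous ⟨fun z => (y, z), continuous_const.prodMk continuous_id⟩).integrable _
  have int0 : Integrable (fun z => h (y₀, z)) (μ y : Measure Z) :=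
    (h.compContinuous ⟨fun z => (y₀, z), continuous_const.prodMk continuous_id⟩).integrable _
  have intB : Integrable (fun z => Set.indicator Uallᶜ (fun _ => 2*C₀) z + ε/4)
      (μ y : Measure Z) :=
    ((integrable_const (2*C₀)).indicator hUmeas.compl).add (integrable_const _)
  have hpt : ∀ z, |h (y, z) - h (y₀, z)| ≤ Set.indicator Uallᶜ (fun _ => 2*C₀) z + ε/4 := by
    intro z
    by_cases hz : z ∈ Uall
    · rw [Set.indicator_of_notMem (by simpa using hz)]
      obtain ⟨s, hs, hzU⟩ := Set.mem_iUnion₂.mp hz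
      have hyVs : y ∈ V s := by
        have := hyV
        rw [hVdef] at this
        exact Set.mem_iInter₂.mp this s hs
      simpa using (hest s y hyVs z hzU).trans (by linarith)
    · rw [Set.indicator_of_mem (by simpa using hz)]
      have h1 := abs_le.mp (habs (y, z))
      have h2 := abs_le.mp (habs (y₀, z))
      have : |h (y, z) - h (y₀, z)| ≤ 2*C₀ := abs_le.mpr ⟨by linarith, by linarith⟩
      linarith
  have term1 : |(∫ z, h (y, z) ∂(μ y : Measure Z)) - ∫ z, h (y₀, z) ∂(μ y : Measure Z)|
      ≤ 2*C₀*δ + ε/4 := by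
    rw [← integral_sub int1 int0]
    refine le_trans (by
      simpa [Real.norm_eq_abs] using
        norm_integral_le_integral_norm (μ := (μ y : Measure Z))
          (f := fun z => h (y, z) - h (y₀, z))) ?_
    refine le_trans (integral_mono (int1.sub int0).abs intB hpt) ?_
    rw [integral_add (((integrable_const (2*C₀)).indicator hUmeas.compl)) (integrable_const _),
      integral_indicator_const _ hUmeas.compl, integral_const]
    have hμδ : ((μ y : Measure Z) Uallᶜ).toReal ≤ δ := by
      refine ENNReal.toReal_le_of_le_ofReal hδpos.le hymass
    have : ((μ y : Measure Z) Uallᶜ).toReal * (2*C₀) ≤ 2*C₀*δ := by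
      nlinarith [ENNReal.toReal_nonneg (a := (μ y : Measure Z) Uallᶜ)]
    have hmeas1 : ((μ y : Measure Z) Set.univ).toReal = 1 := by
      simp [measure_univ]
    rw [measureReal_def, measureReal_def, hmeas1]
    simp only [smul_eq_mul, one_mul]
    linarith
  have hδsmall : 2*C₀*δ ≤ ε/4 := by
    have h1 : δ ≤ ε / (8 * (C₀ + 1)) := min_le_left _ _
    have h2 : 2*C₀*δ ≤ 2*C₀*(ε / (8 * (C₀ + 1))) := by nlinarith
    have h3 : 2*C₀*(ε / (8 * (C₀ + 1))) ≤ ε/4 := by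
      have he : 2*C₀*(ε / (8 * (C₀ + 1))) = 2*C₀*ε / (8 * (C₀ + 1)) := by ring
      rw [he, div_le_iff₀ (by positivity)]
      nlinarith
    linarith
  rw [Real.dist_eq]
  calc |(∫ z, h (y, z) ∂(μ y : Measure Z)) - ∫ z, h (y₀, z) ∂(μ y₀ : Measure Z)|
      ≤ |(∫ z, h (y, z) ∂(μ y : Measure Z)) - ∫ z, h (y₀, z) ∂(μ y : Measure Z)|
        + |(∫ z, h (y₀, z) ∂(μ y : Measure Z)) - ∫ z, h (y₀, z) ∂(μ y₀ : Measure Z)| := by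
        have := abs_sub_le (∫ z, h (y, z) ∂(μ y : Measure Z))
          (∫ z, h (y₀, z) ∂(μ y : Measure Z)) (∫ z, h (y₀, z) ∂(μ y₀ : Measure Z))
        linarith
    _ < ε := by linarith

variable {X Y : Type*} [MetricSpace X] [MetricSpace Y]

/-- Glue the reversed homotopy track at `y` with the `f`-image of a path starting at `g y`. -/
noncomputable def glueFun (f : C(X, Y)) (g : C(Y, X))
    (G : ContinuousMap.Homotopy (f.comp g) (ContinuousMap.id Y)) :
    {p : Y × PathSp X // p.2 0 = g p.1} → PathSp Y :=
  fun p => ((G.evalAt p.1.1).symm.trans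
    ⟨f.comp p.1.2, congrArg f p.2, rfl⟩).toContinuousMap

lemma glueFun_zero (f : C(X, Y)) (g : C(Y, X))
    (G : ContinuousMap.Homotopy (f.comp g) (ContinuousMap.id Y))
    (p : {p : Y × PathSp X // p.2 0 = g p.1}) : glueFun f g G p 0 = p.1.1 :=
  ((G.evalAt p.1.1).symm.trans ⟨f.comp p.1.2, congrArg f p.2, rfl⟩).source'

lemma glueFun_one (f : C(X, Y)) (g : C(Y, X))
    (G : ContinuousMap.Homotopy (f.comp g) (ContinuousMap.id Y))
    (p : {p : Y × PathSp X // p.2 0 = g p.1}) : glueFun f g G p 1 = f (p.1.2 1) :=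
  ((G.evalAt p.1.1).symm.trans ⟨f.comp p.1.2, congrArg f p.2, rfl⟩).target'

lemma glueFun_continuous (f : C(X, Y)) (g : C(Y, X))
    (G : ContinuousMap.Homotopy (f.comp g) (ContinuousMap.id Y)) :
    Continuous (glueFun f g G) := by
  apply ContinuousMap.continuous_of_continuous_uncurry
  have h1 : Continuous
      ↿(fun p : {p : Y × PathSp X // p.2 0 = g p.1} => (G.evalAt p.1.1).symm) := by
    show Continuous fun q : {p : Y × PathSp X // p.2 0 = g p.1} × unitInterval =>
      G (σ q.2, q.1.1.1)
    exact G.continuous.comp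
      ((continuous_symm.comp continuous_snd).prodMk
        (continuous_fst.comp (continuous_subtype_val.comp continuous_fst)))
  have h2 : Continuous
      ↿(fun p : {p : Y × PathSp X // p.2 0 = g p.1} =>
        (⟨f.comp p.1.2, congrArg f p.2, rfl⟩ : Path (f (g p.1.1)) (f (p.1.2 1)))) := by
    show Continuous fun q : {p : Y × PathSp X // p.2 0 = g p.1} × unitInterval =>
      f (q.1.1.2 q.2)
    exact f.continuous.comp (ContinuousEval.continuous_eval.comp
      ((continuous_snd.comp (continuous_subtype_val.comp continuous_fst)).prodMk
        continuous_snd))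
  exact Path.trans_continuous_family _ h1 _ h2

/-- If `X` homotopy dominates `Y` then `dcat Y ≤ dcat X`. -/
theorem dcat_le_of_dominates {X Y : Type} [MetricSpace X] [MetricSpace Y]
    (f : C(X, Y)) (g : C(Y, X))
    (hfg : (f.comp g).Homotopic (ContinuousMap.id Y)) : dcat Y ≤ dcat X := by
  classical
  apply sInf_le_sInf
  rintro c ⟨k, rfl, x0, H, hH⟩
  obtain ⟨G⟩ := hfg
  have hCclosed : IsClosed {p : Y × PathSp X | p.2 0 = g p.1} :=
    isClosed_eq ((continuous_eval_const (0 : unitInterval)).comp continuous_snd)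
      (g.continuous.comp continuous_fst)
  set Ψ : C({p : Y × PathSp X | p.2 0 = g p.1}, PathSp Y) :=
    ⟨glueFun f g G, glueFun_continuous f g G⟩ with hΨdef
  choose S hcard hend hnull using hH
  set Φ : Y → PathSp X → PathSp Y := fun y φ =>
    if hmem : φ ∈ S (g y) then Ψ ⟨(y, φ), (hend (g y) φ hmem).1⟩
    else ContinuousMap.const _ (f x0) with hΦdef
  have hmeasΦ : ∀ y, Measurable (Φ y) := by
    intro y
    have he : Φ y = fun φ => if φ ∈ S (g y) then Φ y φ else ContinuousMap.const _ (f x0) := by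
      funext φ
      by_cases hm : φ ∈ S (g y)
      · simp [hm]
      · simp [hΦdef, hm]
    rw [he]
    exact measurable_finset_modify _ _ _
  have hsupp : ∀ y, ∃ Sy : Finset (PathSp X),
      (∀ φ ∈ Sy, ∃ h : (y, φ) ∈ {p : Y × PathSp X | p.2 0 = g p.1}, Φ y φ = Ψ ⟨(y, φ), h⟩) ∧
      (((H.comp g) y : ProbabilityMeasure (PathSp X)) : Measure (PathSp X))
        ((↑Sy : Set (PathSp X))ᶜ) = 0 := by
    intro y
    refine ⟨S (g y), fun φ hφ => ⟨(hend (g y) φ hφ).1, ?_⟩, hnull (g y)⟩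
    simp [hΦdef, hφ]
  refine ⟨k, rfl, f x0,
    ⟨fun y => ((H.comp g) y).map (hmeasΦ y).aemeasurable,
      continuous_pushforward_of_finite_support (H.comp g) hCclosed Ψ Φ hmeasΦ hsupp⟩, ?_⟩
  intro y
  refine ⟨(S (g y)).image (Φ y), le_trans (Finset.card_image_le) (hcard (g y)), ?_, ?_⟩
  · intro ψ hψ
    obtain ⟨φ, hφ, rfl⟩ := Finset.mem_image.mp hψ
    have hΦφ : Φ y φ = Ψ ⟨(y, φ), (hend (g y) φ hφ).1⟩ := by simp [hΦdef, hφ]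
    rw [hΦφ]
    exact ⟨glueFun_zero f g G _, by
      rw [show (Ψ ⟨(y, φ), (hend (g y) φ hφ).1⟩) 1 = f (φ 1) from glueFun_one f g G _]
      exact congrArg f (hend (g y) φ hφ).2⟩
  · simp only [ContinuousMap.coe_mk]
    rw [ProbabilityMeasure.toMeasure_map,
      Measure.map_apply (hmeasΦ y)
        (((S (g y)).image (Φ y)).finite_toSet.isClosed.measurableSet.compl)]
    refine measure_mono_null ?_ (hnull (g y))
    intro φ hφ
    simp only [Set.mem_preimage, Set.mem_compl_iff, Finset.mem_coe] at hφ ⊢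
    intro hmem
    exact hφ (Finset.mem_image_of_mem _ hmem)

end Auxiliary

/-- Homotopy invariance of the distributional LS-category: if `X` homotopy dominates `Y`
(via `f : X → Y`, `g : Y → X` with `f ∘ g ≃ id`), then `dcat Y ≤ dcat X`; in particular,
homotopy equivalent spaces have the same `dcat`. -/
theorem dcat_homotopy_invariant :
    (∀ (X Y : Type) [MetricSpace X] [MetricSpace Y]
        [PathConnectedSpace X] [PathConnectedSpace Y]
        (f : C(X, Y)) (g : C(Y, X)),
        (f.comp g).Homotopic (ContinuousMap.id Y) → dcat Y ≤ dcat X) ∧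
    (∀ (X Y : Type) [MetricSpace X] [MetricSpace Y]
        [PathConnectedSpace X] [PathConnectedSpace Y],
        Nonempty (ContinuousMap.HomotopyEquiv X Y) → dcat X = dcat Y) := by
  constructor
  · intro X Y _ _ _ _ f g hfg
    exact dcat_le_of_dominates f g hfg
  · rintro X Y _ _ _ _ ⟨h⟩
    exact le_antisymm (dcat_le_of_dominates h.invFun h.toFun h.left_inv)
      (dcat_le_of_dominates h.toFun h.invFun h.right_inv)
end

section
/- For every path-connected metric ANR space X, the distributional LS-category of X is at most the Lusternik–Schnirelmann category of X: dcat(X) ≤ cat(X). -/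
open MeasureTheory unitInterval

/-- The subset `A ⊆ X` is contractible in `X`: the inclusion is null-homotopic. -/
def NullhomotopicIn {X : Type*} [TopologicalSpace X] (A : Set X) : Prop :=
  ∃ x0 : X, ((ContinuousMap.id X).restrict A).Homotopic (ContinuousMap.const (↥A) x0)

/-- The Lusternik–Schnirelmann category: the least `n` such that `X` is covered by
`n+1` open sets, each contractible in `X`. -/
noncomputable def LScat (X : Type*) [TopologicalSpace X] : ℕ∞ :=
  sInf {c : ℕ∞ | ∃ n : ℕ, c = n ∧ ∃ U : Fin (n + 1) → Set X,
    (∀ i, IsOpen (U i)) ∧ (⋃ i, U i) = Set.univ ∧ ∀ i, NullhomotopicIn (U i)}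

lemma exists_pathmap {X : Type*} [TopologicalSpace X] [PathConnectedSpace X]
    (A : Set X) (h : NullhomotopicIn A) (x0 : X) :
    ∃ γ : C(↥A, PathSp X), ∀ a : ↥A, γ a 0 = ↑a ∧ γ a 1 = x0 := by
  obtain ⟨x1, ⟨F⟩⟩ := h
  have p : Path x1 x0 := PathConnectedSpace.somePath x1 x0
  set sg : ℝ → unitInterval := fun r => Set.projIcc (0:ℝ) 1 zero_le_one r with hsg2
  have hsg : Continuous sg := continuous_projIcc
  have hG : Continuous (fun z : ↥A × unitInterval =>
      if ((z.2 : ℝ)) ≤ 1/2 then F (sg (2 * (z.2:ℝ)), z.1) else p (sg (2 * (z.2:ℝ) - 1))) := by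
    apply Continuous.if_le
    · exact F.continuous.comp ((hsg.comp (by fun_prop)).prodMk continuous_fst)
    · exact p.continuous.comp (hsg.comp (by fun_prop))
    · fun_prop
    · fun_prop
    · rintro ⟨a, t⟩ ht
      simp only at ht ⊢
      have h1 : (2:ℝ) * t = 1 := by rw [ht]; ring
      have h2 : (2:ℝ) * t - 1 = 0 := by rw [ht]; ring
      rw [h2, h1]
      have e1 : sg 1 = 1 := by simp [hsg2, Set.projIcc_right]
      have e2 : sg 0 = 0 := by simp [hsg2, Set.projIcc_left]
      rw [e1, e2, F.apply_one]
      simp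
  refine ⟨(ContinuousMap.mk _ hG).curry, fun a => ⟨?_, ?_⟩⟩
  · show (if ((0:unitInterval) : ℝ) ≤ 1/2 then F (sg (2 * ((0:unitInterval):ℝ)), a)
      else p (sg (2 * ((0:unitInterval):ℝ) - 1))) = ↑a
    rw [if_pos (by norm_num)]
    have e2 : sg (2 * ((0:unitInterval):ℝ)) = 0 := by simp [hsg2]
    rw [e2, F.apply_zero]
    rfl
  · show (if ((1:unitInterval) : ℝ) ≤ 1/2 then F (sg (2 * ((1:unitInterval):ℝ)), a)
      else p (sg (2 * ((1:unitInterval):ℝ) - 1))) = x0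
    rw [if_neg (by norm_num)]
    have e2 : sg (2 * ((1:unitInterval):ℝ) - 1) = 1 := by norm_num [hsg2]
    rw [e2]
    exact p.target

open scoped NNReal ENNReal BoundedContinuousFunction Topology
open Filter

/-- `dcat X ≤ cat X` for a path-connected metric (ANR) space. -/
theorem dcat_le_LScat (X : Type*) [MetricSpace X] [PathConnectedSpace X] :
    dcat X ≤ LScat X := by
  classical
  refine le_sInf ?_
  rintro c ⟨n, rfl, U, hUo, hUc, hUn⟩
  have : Nonempty X := PathConnectedSpace.nonempty
  obtain x0 := Classical.arbitrary X
  choose γ hγ using fun i => exists_pathmap (U i) (hUn i) x0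
  obtain ⟨f, hf⟩ := PartitionOfUnity.exists_isSubordinate (ι := Fin (n+1)) isClosed_univ U hUo
      (by rw [hUc])
  set cc : Fin (n+1) → X → ℝ≥0 := fun i x => ⟨f i x, f.nonneg i x⟩ with hcc
  have hcccont : ∀ i, Continuous (cc i) := fun i => ((f i).continuous).subtype_mk _
  set g : Fin (n+1) → X → PathSp X := fun i x =>
    if h : x ∈ U i then γ i ⟨x, h⟩ else ContinuousMap.const _ x0 with hg
  set μ : X → Measure (PathSp X) := fun x =>
    ∑ i, ((cc i x : ℝ≥0∞)) • Measure.dirac (g i x) with hμ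
  have hsum1 : ∀ x, ∑ i, cc i x = 1 := by
    intro x
    have h1 : ∑ i, f i x = 1 := by
      have := f.sum_eq_one (Set.mem_univ x)
      rwa [finsum_eq_sum_of_fintype] at this
    apply NNReal.coe_injective
    push_cast
    exact h1
  have hsum : ∀ x, ∑ i, (cc i x : ℝ≥0∞) = 1 := by
    intro x
    rw [← ENNReal.coe_finset_sum, hsum1 x, ENNReal.coe_one]
  have hprob : ∀ x, IsProbabilityMeasure (μ x) := by
    intro x
    constructor
    rw [hμ]
    simp only [Measure.finset_sum_apply, Measure.smul_apply, smul_eq_mul,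
      Measure.dirac_apply_of_mem (Set.mem_univ _), mul_one]
    exact hsum x
  set HP : X → ProbabilityMeasure (PathSp X) := fun x => ⟨μ x, hprob x⟩ with hHP
  have key : ∀ (ψ : PathSp X →ᵇ ℝ≥0) x,
      ((HP x).toFiniteMeasure).testAgainstNN ψ = ∑ i, cc i x * ψ (g i x) := by
    intro ψ x
    apply ENNReal.coe_injective
    rw [FiniteMeasure.testAgainstNN_coe_eq]
    have hμeq : ((HP x).toFiniteMeasure : Measure (PathSp X)) = μ x := rfl
    rw [hμeq, hμ, lintegral_finset_sum_measure]
    rw [ENNReal.coe_finset_sum]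
    refine Finset.sum_congr rfl fun i _ => ?_
    rw [lintegral_smul_measure, lintegral_dirac]
    simp [ENNReal.coe_mul]
  have hcont_i : ∀ (ψ : PathSp X →ᵇ ℝ≥0) i, Continuous (fun x => cc i x * ψ (g i x)) := by
    intro ψ i
    rw [continuous_iff_continuousAt]
    intro x
    by_cases hx : x ∈ U i
    · have hrestr : ContinuousOn (fun y => cc i y * ψ (g i y)) (U i) := by
        rw [continuousOn_iff_continuous_restrict]
        have heq : (U i).restrict (fun y => cc i y * ψ (g i y)) =
            fun a : ↥(U i) => cc i ↑a * ψ (γ i a) := by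
          funext a
          simp only [Set.restrict_apply, hg]
          show cc i ↑a * ψ (if h : (a:X) ∈ U i then γ i ⟨a, h⟩ else ContinuousMap.const _ x0) = _
          rw [dif_pos a.2]
        rw [show (U i).domRestrict (fun y => cc i y * ψ (g i y)) = _ from heq]
        exact ((hcccont i).comp continuous_subtype_val).mul
          (ψ.continuous.comp (γ i).continuous)
      exact hrestr.continuousAt ((hUo i).mem_nhds hx)
    · have hx' : x ∉ tsupport (f i) := fun hmem => hx (hf i hmem)
      have hev : (fun y => cc i y * ψ (g i y)) =ᶠ[𝓝 x] fun _ => 0 := by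
        filter_upwards [(isClosed_tsupport (f i)).isOpen_compl.mem_nhds hx'] with y hy
        have hz : f i y = 0 := image_eq_zero_of_notMem_tsupport hy
        have hz' : cc i y = 0 := by
          apply NNReal.coe_injective
          exact hz
        simp [hz']
      rw [continuousAt_congr hev]
      exact continuousAt_const
  have hHPcont : Continuous HP := by
    rw [(ProbabilityMeasure.toFiniteMeasure_isEmbedding (PathSp X)).continuous_iff]
    rw [continuous_iff_continuousAt]
    intro x
    show Filter.Tendsto (fun y => (HP y).toFiniteMeasure) (nhds x) (nhds ((HP x).toFiniteMeasure))
    rw [FiniteMeasure.tendsto_iff_forall_testAgainstNN_tendsto]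
    intro ψ
    simp only [key]
    exact ((continuous_finset_sum _ (fun i _ => hcont_i ψ i)).tendsto x)
  refine sInf_le ⟨n, rfl, x0, ⟨HP, hHPcont⟩, fun x => ?_⟩
  have hccne : ∀ i, cc i x ≠ 0 → x ∈ U i := by
    intro i hne
    refine hf i (subset_closure (Function.mem_support.mpr fun h0 => hne ?_))
    apply NNReal.coe_injective
    exact h0
  refine ⟨(Finset.univ.filter (fun i => cc i x ≠ 0)).image (fun i => g i x), ?_, ?_, ?_⟩
  · refine Finset.card_image_le.trans ((Finset.card_filter_le _ _).trans ?_)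
    simp
  · rintro φ hφ
    simp only [Finset.mem_image, Finset.mem_filter, Finset.mem_univ, true_and] at hφ
    obtain ⟨i, hne, rfl⟩ := hφ
    have hxU : x ∈ U i := hccne i hne
    have : g i x = γ i ⟨x, hxU⟩ := by rw [hg]; exact dif_pos hxU
    rw [this]
    exact hγ i ⟨x, hxU⟩
  · set S := (Finset.univ.filter (fun i => cc i x ≠ 0)).image (fun i => g i x) with hS
    have hSm : MeasurableSet (↑S : Set (PathSp X)) := S.measurableSet
    show (μ x) ((↑S : Set (PathSp X))ᶜ) = 0
    rw [hμ, Measure.finset_sum_apply]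
    refine Finset.sum_eq_zero fun i _ => ?_
    rw [Measure.smul_apply, Measure.dirac_apply' _ hSm.compl]
    by_cases hzi : cc i x = 0
    · simp [hzi]
    · have hmem : g i x ∈ (↑S : Set (PathSp X)) := by
        rw [hS]
        exact Finset.mem_coe.mpr
          (Finset.mem_image_of_mem _ (Finset.mem_filter.mpr ⟨Finset.mem_univ i, hzi⟩))
      rw [Set.indicator_of_notMem (by simpa using hmem)]
      simp
end

section
/- The distributional topological complexity is a homotopy invariant: if f : X → Y and g : Y → X are continuous maps with f ∘ g homotopic to the identity of Y, then dTC(Y) ≤ dTC(X). In particular, homotopy equivalent spaces have equal dTC. -/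
open MeasureTheory unitInterval

noncomputable section Construction
open Filter Topology MeasureTheory unitInterval Metric

variable {X Y : Type} [MetricSpace X] [MetricSpace Y]
variable (f : C(X, Y)) (g : C(Y, X))
variable (H : ContinuousMap.Homotopy (f.comp g) (ContinuousMap.id Y))

def goodSet : Set ((Y × Y) × PathSp X) :=
  {z | z.2 0 = g z.1.1 ∧ z.2 1 = g z.1.2}

lemma isClosed_goodSet : IsClosed (goodSet g) := by
  have : goodSet g = {z : (Y × Y) × PathSp X | z.2 0 = g z.1.1} ∩
      {z : (Y × Y) × PathSp X | z.2 1 = g z.1.2} := rfl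
  rw [this]
  refine IsClosed.inter (isClosed_eq ?_ ?_) (isClosed_eq ?_ ?_)
  · exact (continuous_eval_const (0 : unitInterval)).comp continuous_snd
  · exact g.continuous.comp (continuous_fst.comp continuous_fst)
  · exact (continuous_eval_const (1 : unitInterval)).comp continuous_snd
  · exact g.continuous.comp (continuous_snd.comp continuous_fst)

def pathA (p : goodSet g) : Path (p.1.1.1) (f (g p.1.1.1)) where
  toFun := fun t => H (σ t, p.1.1.1)
  continuous_toFun := H.continuous.comp (by continuity)
  source' := by simp
  target' := by simp

def pathB (p : goodSet g) : Path (f (g p.1.1.1)) (f (g p.1.1.2)) where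
  toFun := fun t => f (p.1.2 t)
  continuous_toFun := f.continuous.comp (p.1.2).continuous
  source' := congrArg f p.2.1
  target' := congrArg f p.2.2

def pathC (p : goodSet g) : Path (f (g p.1.1.2)) (p.1.1.2) where
  toFun := fun t => H (t, p.1.1.2)
  continuous_toFun := H.continuous.comp (by continuity)
  source' := by simp
  target' := by simp

def psi (p : goodSet g) : Path p.1.1.1 p.1.1.2 :=
  (pathA f g H p).trans ((pathB f g p).trans (pathC f g H p))

lemma continuous_psi_uncurry : Continuous ↿(psi f g H) := by
  have hval : Continuous fun q : ↥(goodSet g) × unitInterval => (q.1 : (Y × Y) × PathSp X) :=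
    continuous_subtype_val.comp continuous_fst
  apply Path.trans_continuous_family
  · show Continuous fun q : ↥(goodSet g) × unitInterval => H (σ q.2, q.1.1.1.1)
    exact H.continuous.comp ((unitInterval.continuous_symm.comp continuous_snd).prodMk
      (continuous_fst.comp (continuous_fst.comp hval)))
  · apply Path.trans_continuous_family
    · show Continuous fun q : ↥(goodSet g) × unitInterval => f (q.1.1.2 q.2)
      exact f.continuous.comp (ContinuousEval.continuous_eval.comp
        ((continuous_snd.comp hval).prodMk continuous_snd))
    · show Continuous fun q : ↥(goodSet g) × unitInterval => H (q.2, q.1.1.1.2)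
      exact H.continuous.comp (continuous_snd.prodMk
        (continuous_snd.comp (continuous_fst.comp hval)))

def psiC (p : goodSet g) : PathSp Y := (psi f g H p).toContinuousMap

lemma continuous_psiC : Continuous (psiC f g H) :=
  ContinuousMap.continuous_of_continuous_uncurry _ (continuous_psi_uncurry f g H)

lemma psiC_source (p : goodSet g) : psiC f g H p 0 = p.1.1.1 := (psi f g H p).source

lemma psiC_target (p : goodSet g) : psiC f g H p 1 = p.1.1.2 := (psi f g H p).target

open Classical in
def phiTot (q : Y × Y) (γ : PathSp X) : PathSp Y :=
  if h : ((q, γ) ∈ goodSet g) then psiC f g H ⟨(q, γ), h⟩ else ContinuousMap.const _ q.1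

lemma phiTot_of_mem {q : Y × Y} {γ : PathSp X} (h : (q, γ) ∈ goodSet g) :
    phiTot f g H q γ = psiC f g H ⟨(q, γ), h⟩ := dif_pos h

end Construction
lemma aemeas_aux {Ω E : Type*} [MeasurableSpace Ω] [MeasurableSingletonClass Ω]
    [MeasurableSpace E] (μ : Measure Ω) (S : Finset Ω) (hS : μ ((↑S : Set Ω)ᶜ) = 0)
    (f : Ω → E) (e₀ : E) : AEMeasurable f μ := by
  classical
  have hmeas : ∀ T : Finset Ω, Measurable (fun x => if x ∈ T then f x else e₀) := by
    intro T
    induction T using Finset.induction_on with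
    | empty => simpa using measurable_const
    | insert a T ha ih =>
      have hrw : (fun x => if x ∈ insert a T then f x else e₀)
          = fun x => if x = a then f a else (if x ∈ T then f x else e₀) := by
        funext x
        by_cases hx : x = a
        · subst hx; simp
        · simp [hx, Finset.mem_insert]
      rw [hrw]
      exact Measurable.ite (measurableSet_eq) measurable_const ih
  refine ⟨fun x => if x ∈ S then f x else e₀, hmeas S, ?_⟩
  rw [Filter.eventuallyEq_iff_exists_mem]
  exact ⟨(↑S : Set Ω), by rwa [mem_ae_iff], fun x hx => by simp [Finset.mem_coe.mp hx]⟩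

section MainLemma
open Filter Topology MeasureTheory unitInterval Metric BoundedContinuousFunction
open scoped NNReal ENNReal

lemma dTC_le_of_domination (X Y : Type) [MetricSpace X] [MetricSpace Y]
    [PathConnectedSpace X] [PathConnectedSpace Y]
    (f : C(X, Y)) (g : C(Y, X)) (hfg : (f.comp g).Homotopic (ContinuousMap.id Y)) :
    dTC Y ≤ dTC X := by
  classical
  obtain ⟨H⟩ := hfg
  refine le_sInf ?_
  rintro c ⟨n, rfl, s, hs⟩
  refine sInf_le ⟨n, rfl, ?_⟩
  set m : Y × Y → ProbabilityMeasure (PathSp X) := fun q => s (g q.1, g q.2) with hm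
  have hmcont : Continuous m :=
    s.continuous.comp ((g.continuous.comp continuous_fst).prodMk (g.continuous.comp continuous_snd))
  have hq : ∀ q : Y × Y, DistPaths (n + 1) (g q.1) (g q.2) (m q) := fun q => hs (g q.1) (g q.2)
  choose S hScard hSend hSnull using hq
  have hgood : ∀ (q : Y × Y), ∀ γ ∈ S q, (q, γ) ∈ goodSet g := by
    intro q γ hγ
    exact ⟨(hSend q γ hγ).1, (hSend q γ hγ).2⟩
  have hAE : ∀ q : Y × Y, AEMeasurable (phiTot f g H q) (m q : Measure (PathSp X)) :=
    fun q => aemeas_aux _ (S q) (hSnull q) _ (ContinuousMap.const _ q.1)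
  set s' : Y × Y → ProbabilityMeasure (PathSp Y) := fun q => (m q).map (hAE q) with hs'
  have hdp : ∀ q : Y × Y, DistPaths (n + 1) q.1 q.2 (s' q) := by
    intro q
    refine ⟨(S q).image (phiTot f g H q), le_trans Finset.card_image_le (hScard q), ?_, ?_⟩
    · intro φ hφ
      obtain ⟨γ, hγ, rfl⟩ := Finset.mem_image.mp hφ
      rw [phiTot_of_mem f g H (hgood q γ hγ)]
      exact ⟨psiC_source f g H _, psiC_target f g H _⟩
    · rw [hs']
      rw [ProbabilityMeasure.toMeasure_map,
        Measure.map_apply_of_aemeasurable (hAE q) (((S q).image (phiTot f g H q)).measurableSet.compl)]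
      refine measure_mono_null ?_ (hSnull q)
      intro γ hγ
      simp only [Set.mem_preimage, Set.mem_compl_iff, Finset.mem_coe] at hγ ⊢
      intro hmem
      exact hγ (Finset.mem_image_of_mem _ hmem)
  have hconts' : Continuous s' := by
    rw [continuous_iff_continuousAt]
    intro y
    have hmy : Tendsto m (𝓝 y) (𝓝 (m y)) := hmcont.tendsto y
    have hweak := ProbabilityMeasure.tendsto_iff_forall_lintegral_tendsto.mp hmy
    rw [ContinuousAt, ProbabilityMeasure.tendsto_iff_forall_lintegral_tendsto]
    intro fbc
    set C : ℝ≥0 := nndist fbc 0 with hC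
    have hfb_le : ∀ φ, fbc φ ≤ C := fun φ => BoundedContinuousFunction.NNReal.upper_bound fbc φ
    obtain ⟨Gt, hGt⟩ := ContinuousMap.exists_restrict_eq (Y := ℝ) (isClosed_goodSet g)
      ⟨fun p => ((fbc (psiC f g H p) : ℝ≥0) : ℝ),
        NNReal.continuous_coe.comp (fbc.continuous.comp (continuous_psiC f g H))⟩
    set Gh : (Y × Y) × PathSp X → ℝ≥0 := fun z => Real.toNNReal (min (Gt z) (C : ℝ)) with hGh
    have hGhcont : Continuous Gh :=
      continuous_real_toNNReal.comp ((map_continuous Gt).min continuous_const)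
    have hGh_le : ∀ z, Gh z ≤ C := fun z =>
      Real.toNNReal_le_iff_le_coe.mpr (min_le_right _ _)
    have hGhA : ∀ (z : (Y × Y) × PathSp X) (hz : z ∈ goodSet g),
        Gh z = fbc (psiC f g H ⟨z, hz⟩) := by
      intro z hz
      have h1 : Gt z = ((fbc (psiC f g H ⟨z, hz⟩) : ℝ≥0) : ℝ) := by
        have h2 := DFunLike.congr_fun hGt (⟨z, hz⟩ : ↥(goodSet g))
        simpa [ContinuousMap.restrict_apply] using h2
      simp only [hGh]
      rw [h1, min_eq_left (by exact_mod_cast hfb_le (psiC f g H ⟨z, hz⟩)), Real.toNNReal_coe]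
    have hIq : ∀ q : Y × Y, ∫⁻ φ, (fbc φ : ℝ≥0∞) ∂(s' q : Measure (PathSp Y))
        = ∫⁻ γ, (Gh (q, γ) : ℝ≥0∞) ∂(m q : Measure (PathSp X)) := by
      intro q
      rw [hs']
      rw [ProbabilityMeasure.toMeasure_map,
        lintegral_map' (fbc.continuous.measurable.coe_nnreal_ennreal).aemeasurable (hAE q)]
      refine lintegral_congr_ae ?_
      rw [Filter.eventuallyEq_iff_exists_mem]
      refine ⟨(↑(S q) : Set (PathSp X)), by rw [mem_ae_iff]; exact hSnull q, fun γ hγ => ?_⟩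
      have hmem := hgood q γ (Finset.mem_coe.mp hγ)
      simp only [phiTot_of_mem f g H hmem, hGhA _ hmem]
    simp only [hIq]
    have hmeasG : ∀ q' : Y × Y, Measurable fun γ : PathSp X => (Gh (q', γ) : ℝ≥0∞) := fun q' =>
      ((hGhcont.comp (Continuous.prodMk_right q')).measurable).coe_nnreal_ennreal
    have hboundy : ∀ (ν : ProbabilityMeasure (PathSp X)) (q' : Y × Y),
        ∫⁻ γ, (Gh (q', γ) : ℝ≥0∞) ∂(ν : Measure (PathSp X)) ≤ (C : ℝ≥0∞) := by
      intro ν q'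
      calc ∫⁻ γ, (Gh (q', γ) : ℝ≥0∞) ∂(ν : Measure (PathSp X))
          ≤ ∫⁻ _, (C : ℝ≥0∞) ∂(ν : Measure (PathSp X)) :=
            lintegral_mono fun γ => ENNReal.coe_le_coe.mpr (hGh_le _)
        _ = (C : ℝ≥0∞) := by rw [lintegral_const]; simp
    have hJfin : ∫⁻ γ, (Gh (y, γ) : ℝ≥0∞) ∂(m y : Measure (PathSp X)) ≠ ⊤ :=
      (lt_of_le_of_lt (hboundy (m y) y) ENNReal.coe_lt_top).ne
    rw [ENNReal.tendsto_nhds hJfin]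
    intro ε hε
    set ε₀ : ℝ≥0∞ := min ε 1 with hε₀
    have hε₀pos : 0 < ε₀ := lt_min hε zero_lt_one
    have hε₀top : ε₀ ≠ ⊤ := (lt_of_le_of_lt (min_le_right _ _) ENNReal.one_lt_top).ne
    have hε₀le : ε₀ ≤ ε := min_le_left _ _
    suffices hsuff : ∀ᶠ q in 𝓝 y, (∫⁻ γ, (Gh (q, γ) : ℝ≥0∞) ∂(m q : Measure (PathSp X))) ∈
        Set.Icc ((∫⁻ γ, (Gh (y, γ) : ℝ≥0∞) ∂(m y : Measure (PathSp X))) - ε₀)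
                ((∫⁻ γ, (Gh (y, γ) : ℝ≥0∞) ∂(m y : Measure (PathSp X))) + ε₀) by
      filter_upwards [hsuff] with q hq
      exact ⟨le_trans (tsub_le_tsub_left hε₀le _) hq.1, le_trans hq.2 (add_le_add_right hε₀le _)⟩
    set δ : ℝ≥0 := ε₀.toNNReal / (8 * (C + 1)) with hδ
    have hδpos : 0 < δ := by
      rw [hδ]
      exact div_pos (ENNReal.toNNReal_pos hε₀pos.ne' hε₀top) (by positivity)
    have hδle : (2 * (δ : ℝ≥0∞) + 2 * (C : ℝ≥0∞) * (δ : ℝ≥0∞)) ≤ ε₀ / 2 := by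
      have h1 : 2 * δ + 2 * C * δ ≤ ε₀.toNNReal / 2 := by
        have hc : (0:ℝ) ≤ (C:ℝ) := C.coe_nonneg
        have he : (0:ℝ) ≤ (ε₀.toNNReal : ℝ) := (ε₀.toNNReal).coe_nonneg
        have h8 : (0:ℝ) < 8 * ((C:ℝ) + 1) := by positivity
        rw [← NNReal.coe_le_coe]
        push_cast [hδ]
        have key : ∀ x : ℝ, 0 ≤ x →
            2 * (x / (8 * ((C:ℝ) + 1))) + 2 * (C:ℝ) * (x / (8 * ((C:ℝ) + 1))) ≤ x / 2 := by
          intro x hx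
          have hrw : 2 * (x / (8 * ((C:ℝ) + 1))) + 2 * (C:ℝ) * (x / (8 * ((C:ℝ) + 1)))
              = x * (2 * ((C:ℝ) + 1)) / (8 * ((C:ℝ) + 1)) := by ring
          rw [hrw, div_le_div_iff₀ h8 (by norm_num : (0:ℝ) < 2)]
          nlinarith
        exact key _ ENNReal.toReal_nonneg
      calc (2 * (δ : ℝ≥0∞) + 2 * (C : ℝ≥0∞) * (δ : ℝ≥0∞))
          = ((2 * δ + 2 * C * δ : ℝ≥0) : ℝ≥0∞) := by push_cast; ring
        _ ≤ ((ε₀.toNNReal / 2 : ℝ≥0) : ℝ≥0∞) := ENNReal.coe_le_coe.mpr h1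
        _ = ε₀ / 2 := by
            rw [ENNReal.coe_div (by norm_num : (2:ℝ≥0) ≠ 0), ENNReal.coe_toNNReal hε₀top]
            norm_num
    have hδposR : (0:ℝ) < (δ:ℝ) := hδpos
    have hdata : ∀ φ : PathSp X, ∃ W : Set (Y × Y), W ∈ 𝓝 y ∧ ∃ r : ℝ, 0 < r ∧
        ∀ q' ∈ W, ∀ γ' : PathSp X, dist γ' φ < r →
          dist (Gh (q', γ')) (Gh (y, φ)) < (δ : ℝ) := by
      intro φ
      obtain ⟨ρ, hρ, hprop⟩ :=
        Metric.continuousAt_iff.mp (hGhcont.continuousAt (x := (y, φ))) (δ:ℝ) hδposR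
      refine ⟨Metric.ball y ρ, Metric.ball_mem_nhds y hρ, ρ, hρ, fun q' hq' γ' hγ' => ?_⟩
      exact hprop (by rw [Prod.dist_eq]; exact max_lt (Metric.mem_ball.mp hq') hγ')
    choose W hW r hr hWr using hdata
    have hSyne : (S y).Nonempty := by
      rw [Finset.nonempty_iff_ne_empty]
      intro hSe
      have h0 := hSnull y
      rw [hSe] at h0
      simp only [Finset.coe_empty, Set.compl_empty, measure_univ] at h0
      exact one_ne_zero h0
    set rmin : ℝ := (S y).inf' hSyne r with hrmin
    have hrminpos : 0 < rmin := by
      rw [hrmin, Finset.lt_inf'_iff]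
      exact fun φ _ => hr φ
    set hcut : PathSp X → ℝ≥0 :=
      fun γ => Real.toNNReal (1 - Metric.infDist γ (↑(S y)) / rmin) with hhcut
    have hcutcont : Continuous hcut :=
      continuous_real_toNNReal.comp
        (continuous_const.sub ((Metric.continuous_infDist_pt _).div_const rmin))
    have hcut_le_one : ∀ γ, hcut γ ≤ 1 := by
      intro γ
      rw [hhcut]
      simp only
      rw [← Real.toNNReal_one]
      refine Real.toNNReal_le_toNNReal ?_
      have : 0 ≤ Metric.infDist γ (↑(S y)) / rmin :=
        div_nonneg Metric.infDist_nonneg hrminpos.le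
      linarith
    have hcut_on_S : ∀ γ ∈ S y, hcut γ = 1 := by
      intro γ hγ
      rw [hhcut]
      simp only
      rw [Metric.infDist_zero_of_mem (Finset.mem_coe.mpr hγ), zero_div, sub_zero,
        Real.toNNReal_one]
    have hcut_lt : ∀ γ : PathSp X, hcut γ ≠ 0 → ∃ φ ∈ S y, dist γ φ < r φ := by
      intro γ hγ
      rw [hhcut] at hγ
      simp only [ne_eq, Real.toNNReal_eq_zero, not_le] at hγ
      have hlt : Metric.infDist γ (↑(S y)) < rmin := by
        refine (div_lt_one hrminpos).mp ?_
        linarith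
      obtain ⟨φ, hφ, hd⟩ :=
        (Metric.infDist_lt_iff (Finset.coe_nonempty.mpr hSyne)).mp hlt
      exact ⟨φ, Finset.mem_coe.mp hφ, hd.trans_le (Finset.inf'_le r (Finset.mem_coe.mp hφ))⟩
    have hdistb : ∀ (B u v : ℝ≥0), u ≤ B → v ≤ B → dist u v ≤ (B:ℝ) := by
      intro B u v hu hv
      rw [NNReal.dist_eq, abs_sub_le_iff]
      have hu' : (u:ℝ) ≤ B := hu
      have hv' : (v:ℝ) ≤ B := hv
      have := u.coe_nonneg
      have := v.coe_nonneg
      exact ⟨by linarith, by linarith⟩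
    set hcutB : PathSp X →ᵇ ℝ≥0 := ⟨⟨hcut, hcutcont⟩,
      ⟨1, fun u v => hdistb 1 _ _ (hcut_le_one u) (hcut_le_one v)⟩⟩ with hhcutB
    set GyB : PathSp X →ᵇ ℝ≥0 := ⟨⟨fun γ => Gh (y, γ), hGhcont.comp (Continuous.prodMk_right y)⟩,
      ⟨C, fun u v => hdistb C _ _ (hGh_le _) (hGh_le _)⟩⟩ with hGyB
    have hEV1 : ∀ᶠ q in 𝓝 y, (∫⁻ γ, (Gh (y, γ) : ℝ≥0∞) ∂(m q : Measure (PathSp X))) ∈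
        Set.Icc ((∫⁻ γ, (Gh (y, γ) : ℝ≥0∞) ∂(m y : Measure (PathSp X))) - ε₀/2)
                ((∫⁻ γ, (Gh (y, γ) : ℝ≥0∞) ∂(m y : Measure (PathSp X))) + ε₀/2) := by
      have h := hweak GyB
      have hcoe : ∀ ν : ProbabilityMeasure (PathSp X),
          ∫⁻ ω, (GyB ω : ℝ≥0∞) ∂(ν : Measure (PathSp X)) = ∫⁻ γ, (Gh (y, γ) : ℝ≥0∞) ∂(ν : Measure (PathSp X)) :=
        fun ν => rfl
      simp only [hcoe] at h
      exact (ENNReal.tendsto_nhds hJfin).mp h (ε₀/2) (ENNReal.half_pos hε₀pos.ne')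
    have hinthcut : ∫⁻ γ, (hcut γ : ℝ≥0∞) ∂(m y : Measure (PathSp X)) = 1 := by
      have heq : ∫⁻ γ, (hcut γ : ℝ≥0∞) ∂(m y : Measure (PathSp X))
          = ∫⁻ _, (1:ℝ≥0∞) ∂(m y : Measure (PathSp X)) := by
        refine lintegral_congr_ae ?_
        rw [Filter.eventuallyEq_iff_exists_mem]
        refine ⟨(↑(S y) : Set (PathSp X)), by rw [mem_ae_iff]; exact hSnull y, fun γ hγ => ?_⟩
        simp only [hcut_on_S γ (Finset.mem_coe.mp hγ), ENNReal.coe_one]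
      rw [heq]; simp
    have hEV2 : ∀ᶠ q in 𝓝 y,
        (1:ℝ≥0∞) - δ ≤ ∫⁻ γ, (hcut γ : ℝ≥0∞) ∂(m q : Measure (PathSp X)) := by
      have h := hweak hcutB
      have hL : (∫⁻ ω, (hcutB ω : ℝ≥0∞) ∂(m y : Measure (PathSp X))) = 1 := hinthcut
      rw [hL] at h
      have h2 := (ENNReal.tendsto_nhds ENNReal.one_ne_top).mp h (δ:ℝ≥0∞) (ENNReal.coe_pos.mpr hδpos)
      filter_upwards [h2] with q hq
      exact hq.1
    have hEV3 : ∀ᶠ q in 𝓝 y, ∀ φ ∈ S y, q ∈ W φ := by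
      rw [Filter.eventually_all_finset]
      exact fun φ _ => Filter.eventually_mem_set.mpr (hW φ)
    filter_upwards [hEV1, hEV2, hEV3] with q h1 h2 h3
    have hyW : ∀ φ ∈ S y, y ∈ W φ := fun φ _ => mem_of_mem_nhds (hW φ)
    have hpt : ∀ γ : PathSp X,
        ((Gh (q, γ) : ℝ≥0∞) ≤ (Gh (y, γ) : ℝ≥0∞)
            + (2*(δ:ℝ≥0∞) + 2*(C:ℝ≥0∞)*(1 - (hcut γ : ℝ≥0∞))))
        ∧ ((Gh (y, γ) : ℝ≥0∞) ≤ (Gh (q, γ) : ℝ≥0∞)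
            + (2*(δ:ℝ≥0∞) + 2*(C:ℝ≥0∞)*(1 - (hcut γ : ℝ≥0∞)))) := by
      intro γ
      by_cases hz : hcut γ = 0
      · rw [hz]
        simp only [ENNReal.coe_zero, tsub_zero, mul_one]
        constructor
        · calc (Gh (q, γ) : ℝ≥0∞) ≤ (C:ℝ≥0∞) := ENNReal.coe_le_coe.mpr (hGh_le _)
            _ ≤ 2*(C:ℝ≥0∞) := le_mul_of_one_le_left zero_le one_le_two
            _ ≤ 2*(δ:ℝ≥0∞) + 2*(C:ℝ≥0∞) := self_le_add_left _ _
            _ ≤ _ := self_le_add_left _ _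
        · calc (Gh (y, γ) : ℝ≥0∞) ≤ (C:ℝ≥0∞) := ENNReal.coe_le_coe.mpr (hGh_le _)
            _ ≤ 2*(C:ℝ≥0∞) := le_mul_of_one_le_left zero_le one_le_two
            _ ≤ 2*(δ:ℝ≥0∞) + 2*(C:ℝ≥0∞) := self_le_add_left _ _
            _ ≤ _ := self_le_add_left _ _
      · obtain ⟨φ, hφS, hdγ⟩ := hcut_lt γ hz
        have d1 : dist (Gh (q, γ)) (Gh (y, φ)) < (δ:ℝ) := hWr φ q (h3 φ hφS) γ hdγ
        have d2 : dist (Gh (y, γ)) (Gh (y, φ)) < (δ:ℝ) := hWr φ y (hyW φ hφS) γ hdγ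
        have dtri : dist (Gh (q, γ)) (Gh (y, γ)) < 2*(δ:ℝ) := by
          calc dist (Gh (q, γ)) (Gh (y, γ))
              ≤ dist (Gh (q, γ)) (Gh (y, φ)) + dist (Gh (y, φ)) (Gh (y, γ)) :=
                dist_triangle _ _ _
            _ < (δ:ℝ) + (δ:ℝ) := by
                rw [dist_comm (Gh (y, φ))]; exact add_lt_add d1 d2
            _ = 2*(δ:ℝ) := by ring
        have habs := abs_sub_lt_iff.mp (by rwa [NNReal.dist_eq] at dtri)
        have hb1 : Gh (q, γ) ≤ Gh (y, γ) + 2*δ := by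
          rw [← NNReal.coe_le_coe]
          push_cast
          linarith [habs.1]
        have hb2 : Gh (y, γ) ≤ Gh (q, γ) + 2*δ := by
          rw [← NNReal.coe_le_coe]
          push_cast
          linarith [habs.2]
        constructor
        · calc (Gh (q, γ) : ℝ≥0∞) ≤ ((Gh (y, γ) + 2*δ : ℝ≥0) : ℝ≥0∞) :=
              ENNReal.coe_le_coe.mpr hb1
            _ = (Gh (y, γ) : ℝ≥0∞) + 2*(δ:ℝ≥0∞) := by push_cast; ring
            _ ≤ _ := add_le_add_right (self_le_add_right _ _) _
        · calc (Gh (y, γ) : ℝ≥0∞) ≤ ((Gh (q, γ) + 2*δ : ℝ≥0) : ℝ≥0∞) :=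
              ENNReal.coe_le_coe.mpr hb2
            _ = (Gh (q, γ) : ℝ≥0∞) + 2*(δ:ℝ≥0∞) := by push_cast; ring
            _ ≤ _ := add_le_add_right (self_le_add_right _ _) _
    have hmeascut : Measurable fun γ : PathSp X => (hcut γ : ℝ≥0∞) :=
      hcutcont.measurable.coe_nnreal_ennreal
    have hintcut_le : ∫⁻ γ, ((1:ℝ≥0∞) - (hcut γ : ℝ≥0∞)) ∂(m q : Measure (PathSp X)) ≤ (δ:ℝ≥0∞) := by
      have hfin1 : ∫⁻ γ, (hcut γ : ℝ≥0∞) ∂(m q : Measure (PathSp X)) ≠ ⊤ := by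
        refine ne_top_of_le_ne_top ENNReal.one_ne_top ?_
        calc ∫⁻ γ, (hcut γ : ℝ≥0∞) ∂(m q : Measure (PathSp X))
            ≤ ∫⁻ _, (1:ℝ≥0∞) ∂(m q : Measure (PathSp X)) :=
              lintegral_mono fun γ => ENNReal.coe_le_one_iff.mpr (hcut_le_one γ)
          _ = 1 := by rw [lintegral_one, measure_univ]
      have hsub : ∫⁻ γ, ((1:ℝ≥0∞) - (hcut γ : ℝ≥0∞)) ∂(m q : Measure (PathSp X))
          = (1:ℝ≥0∞) - ∫⁻ γ, (hcut γ : ℝ≥0∞) ∂(m q : Measure (PathSp X)) := by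
        have h1 : ∫⁻ _, (1:ℝ≥0∞) ∂(m q : Measure (PathSp X)) = 1 := by
          rw [lintegral_one, measure_univ]
        conv_rhs => rw [← h1]
        refine lintegral_sub hmeascut hfin1 ?_
        exact Filter.Eventually.of_forall fun γ => ENNReal.coe_le_one_iff.mpr (hcut_le_one γ)
      rw [hsub]
      calc (1:ℝ≥0∞) - ∫⁻ γ, (hcut γ : ℝ≥0∞) ∂(m q : Measure (PathSp X))
          ≤ 1 - ((1:ℝ≥0∞) - δ) := tsub_le_tsub_left h2 1
        _ ≤ δ := tsub_tsub_le
    have hsplit : ∀ q' : Y × Y,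
        ∫⁻ γ, ((Gh (q', γ) : ℝ≥0∞)
            + (2*(δ:ℝ≥0∞) + 2*(C:ℝ≥0∞)*(1 - (hcut γ : ℝ≥0∞)))) ∂(m q : Measure (PathSp X))
        = (∫⁻ γ, (Gh (q', γ) : ℝ≥0∞) ∂(m q : Measure (PathSp X)))
            + (2*(δ:ℝ≥0∞) + 2*(C:ℝ≥0∞) * ∫⁻ γ, ((1:ℝ≥0∞) - (hcut γ : ℝ≥0∞)) ∂(m q : Measure (PathSp X))) := by
      intro q'
      rw [lintegral_add_left (hmeasG q')]
      congr 1
      rw [lintegral_add_left measurable_const, lintegral_const, measure_univ, mul_one]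
      congr 1
      exact lintegral_const_mul _ (measurable_const.sub hmeascut)
    have hbound2 : (2*(δ:ℝ≥0∞) + 2*(C:ℝ≥0∞) * ∫⁻ γ, ((1:ℝ≥0∞) - (hcut γ : ℝ≥0∞)) ∂(m q : Measure (PathSp X)))
        ≤ ε₀/2 :=
      le_trans (add_le_add_right (mul_le_mul_right hintcut_le _) _) hδle
    have key1 : ∫⁻ γ, (Gh (q, γ) : ℝ≥0∞) ∂(m q : Measure (PathSp X))
        ≤ (∫⁻ γ, (Gh (y, γ) : ℝ≥0∞) ∂(m q : Measure (PathSp X))) + ε₀/2 := by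
      refine le_trans (lintegral_mono fun γ => (hpt γ).1) ?_
      rw [hsplit y]
      exact add_le_add_right hbound2 _
    have key2 : ∫⁻ γ, (Gh (y, γ) : ℝ≥0∞) ∂(m q : Measure (PathSp X))
        ≤ (∫⁻ γ, (Gh (q, γ) : ℝ≥0∞) ∂(m q : Measure (PathSp X))) + ε₀/2 := by
      refine le_trans (lintegral_mono fun γ => (hpt γ).2) ?_
      rw [hsplit q]
      exact add_le_add_right hbound2 _
    constructor
    · rw [tsub_le_iff_right]
      calc ∫⁻ γ, (Gh (y, γ) : ℝ≥0∞) ∂(m y : Measure (PathSp X))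
          ≤ (∫⁻ γ, (Gh (y, γ) : ℝ≥0∞) ∂(m q : Measure (PathSp X))) + ε₀/2 := tsub_le_iff_right.mp h1.1
        _ ≤ ((∫⁻ γ, (Gh (q, γ) : ℝ≥0∞) ∂(m q : Measure (PathSp X))) + ε₀/2) + ε₀/2 :=
            add_le_add_left key2 _
        _ = (∫⁻ γ, (Gh (q, γ) : ℝ≥0∞) ∂(m q : Measure (PathSp X))) + ε₀ := by
            rw [add_assoc, ENNReal.add_halves]
    · calc ∫⁻ γ, (Gh (q, γ) : ℝ≥0∞) ∂(m q : Measure (PathSp X))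
          ≤ (∫⁻ γ, (Gh (y, γ) : ℝ≥0∞) ∂(m q : Measure (PathSp X))) + ε₀/2 := key1
        _ ≤ ((∫⁻ γ, (Gh (y, γ) : ℝ≥0∞) ∂(m y : Measure (PathSp X))) + ε₀/2) + ε₀/2 :=
            add_le_add_left h1.2 _
        _ = (∫⁻ γ, (Gh (y, γ) : ℝ≥0∞) ∂(m y : Measure (PathSp X))) + ε₀ := by
            rw [add_assoc, ENNReal.add_halves]
  exact ⟨⟨s', hconts'⟩, fun a b => hdp (a, b)⟩

end MainLemma

/-- Homotopy invariance of the distributional topological complexity: if `X` homotopy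
dominates `Y` (via `f : X → Y`, `g : Y → X` with `f ∘ g ≃ id`), then `dTC Y ≤ dTC X`;
in particular, homotopy equivalent spaces have the same `dTC`. -/
theorem dTC_homotopy_invariant :
    (∀ (X Y : Type) [MetricSpace X] [MetricSpace Y]
        [PathConnectedSpace X] [PathConnectedSpace Y]
        (f : C(X, Y)) (g : C(Y, X)),
        (f.comp g).Homotopic (ContinuousMap.id Y) → dTC Y ≤ dTC X) ∧
    (∀ (X Y : Type) [MetricSpace X] [MetricSpace Y]
        [PathConnectedSpace X] [PathConnectedSpace Y],
        Nonempty (ContinuousMap.HomotopyEquiv X Y) → dTC X = dTC Y) := by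
  constructor
  · exact fun X Y _ _ _ _ f g h => dTC_le_of_domination X Y f g h
  · rintro X Y _ _ _ _ ⟨h⟩
    exact le_antisymm (dTC_le_of_domination Y X h.invFun h.toFun h.left_inv)
      (dTC_le_of_domination X Y h.toFun h.invFun h.right_inv)
end

section
/- For every path-connected metric ANR space X, dTC(X) ≤ TC(X), where TC is Farber's topological complexity. -/
open MeasureTheory unitInterval
open scoped ENNReal NNReal BoundedContinuousFunction

/-- Farber's topological complexity: the least `n` such that `X × X` is covered by `n+1`
open sets, over each of which the end-points fibration `P(X) → X × X` admits a continuous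
section. -/
noncomputable def FarberTC (X : Type*) [TopologicalSpace X] : ℕ∞ :=
  sInf {c : ℕ∞ | ∃ n : ℕ, c = n ∧ ∃ U : Fin (n + 1) → Set (X × X),
    (∀ i, IsOpen (U i)) ∧ (⋃ i, U i) = Set.univ ∧
    ∀ i, ∃ sec : C(↥(U i), PathSp X),
      ∀ z : ↥(U i), sec z 0 = (z : X × X).1 ∧ sec z 1 = (z : X × X).2}

/-- `dTC X ≤ TC X` for a path-connected metric (ANR) space. -/
theorem dTC_le_TC (X : Type*) [MetricSpace X] [PathConnectedSpace X] :
    dTC X ≤ FarberTC X := by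
  classical
  refine le_sInf ?_
  rintro c ⟨n, rfl, U, hUo, hUc, hsec⟩
  have hX : Nonempty X := PathConnectedSpace.nonempty
  have hsec' : ∀ i, ∃ s : C(↥(U i), PathSp X),
      (∀ z : ↥(U i), s z 0 = (z : X × X).1) ∧ (∀ z : ↥(U i), s z 1 = (z : X × X).2) :=
    fun i => (hsec i).imp fun s hs => ⟨fun z => (hs z).1, fun z => (hs z).2⟩
  choose sec hsec0 hsec1 using hsec'
  -- partition of unity
  obtain ⟨ρ, hρ⟩ := PartitionOfUnity.exists_isSubordinate (s := (Set.univ : Set (X × X)))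
    isClosed_univ U hUo (by rw [hUc])
  -- nonnegative coefficients
  set cf : Fin (n+1) → X × X → ℝ≥0 := fun i z => Real.toNNReal (ρ i z) with hcf
  have hcfc : ∀ i, Continuous (cf i) := fun i =>
    continuous_real_toNNReal.comp (ρ i).continuous
  -- paths
  set p : Fin (n+1) → X × X → PathSp X := fun i z =>
    if h : z ∈ U i then sec i ⟨z, h⟩ else ContinuousMap.const _ (Classical.arbitrary X) with hp
  have hpU : ∀ i z (h : z ∈ U i), p i z = sec i ⟨z, h⟩ := fun i z h => dif_pos h
  -- sum of coefficients = 1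
  have hsum : ∀ z, (∑ i, (cf i z : ℝ)) = 1 := by
    intro z
    have h1 := ρ.sum_eq_one (Set.mem_univ z)
    rw [finsum_eq_sum_of_fintype] at h1
    rw [← h1]
    exact Finset.sum_congr rfl fun i _ => Real.coe_toNNReal _ (ρ.nonneg i z)
  have hsum' : ∀ z, (∑ i, ((cf i z : ℝ≥0∞))) = 1 := by
    intro z
    rw [← ENNReal.coe_finset_sum]
    norm_cast
    exact_mod_cast NNReal.coe_injective (by push_cast; exact hsum z)
  -- the measure
  set m : X × X → Measure (PathSp X) := fun z =>
    ∑ i, (cf i z : ℝ≥0∞) • Measure.dirac (p i z) with hm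
  have hmP : ∀ z, IsProbabilityMeasure (m z) := by
    intro z
    constructor
    rw [hm]
    simp only [Measure.finset_sum_apply, Measure.smul_apply, smul_eq_mul,
      Measure.dirac_apply_of_mem (Set.mem_univ _), mul_one]
    exact hsum' z
  -- lintegral formula
  have hlint : ∀ (f : PathSp X →ᵇ ℝ≥0) z,
      ∫⁻ ω, (f ω : ℝ≥0∞) ∂(m z) = ∑ i, ((cf i z * f (p i z) : ℝ≥0) : ℝ≥0∞) := by
    intro f z
    rw [hm, lintegral_finset_sum_measure]
    refine Finset.sum_congr rfl fun i _ => ?_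
    rw [lintegral_smul_measure, lintegral_dirac' _
      (show Measurable fun ω : PathSp X => (f ω : ℝ≥0∞) from
        measurable_coe_nnreal_ennreal.comp f.continuous.measurable)]
    push_cast
    ring
  -- continuity of each test term
  have hterm : ∀ (f : PathSp X →ᵇ ℝ≥0) i, Continuous (fun z => (cf i z * f (p i z) : ℝ≥0)) := by
    intro f i
    rw [continuous_iff_continuousAt]
    intro z₀
    by_cases h0 : z₀ ∈ U i
    · have hcont : ContinuousOn (fun z => (cf i z * f (p i z) : ℝ≥0)) (U i) := by
        apply ContinuousOn.mul ((hcfc i).continuousOn)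
        rw [continuousOn_iff_continuous_restrict]
        have : (U i).restrict (fun z => f (p i z)) = fun z : U i => f (sec i z) := by
          funext z; exact congrArg f (hpU i z.1 z.2)
        show Continuous ((U i).restrict fun z => f (p i z))
        rw [this]
        exact f.continuous.comp (sec i).continuous
      exact hcont.continuousAt ((hUo i).mem_nhds h0)
    · have hz : z₀ ∈ (tsupport (ρ i))ᶜ := fun h => h0 (hρ i h)
      have hmem : (tsupport (ρ i))ᶜ ∈ nhds z₀ :=
        (isClosed_tsupport _).isOpen_compl.mem_nhds hz
      have : ∀ᶠ z in nhds z₀, (cf i z * f (p i z) : ℝ≥0) = 0 := by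
        filter_upwards [hmem] with z hz'
        have : ρ i z = 0 := image_eq_zero_of_notMem_tsupport hz'
        simp [hcf, this]
      exact Filter.EventuallyEq.continuousAt (y := (0 : ℝ≥0)) this
  -- the continuous family of probability measures
  refine sInf_le ⟨n, rfl, ⟨fun z => (⟨m z, hmP z⟩ : ProbabilityMeasure (PathSp X)), ?_⟩, ?_⟩
  · refine continuous_iff_continuousAt.mpr ?_
    intro z₀
    refine ProbabilityMeasure.tendsto_iff_forall_lintegral_tendsto.mpr ?_
    intro f
    have : Continuous fun z => ∑ i, ((cf i z * f (p i z) : ℝ≥0) : ℝ≥0∞) :=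
      continuous_finset_sum _ fun i _ => ENNReal.continuous_coe.comp (hterm f i)
    show Filter.Tendsto (fun z => ∫⁻ ω, (f ω : ℝ≥0∞) ∂(m z)) (nhds z₀)
      (nhds (∫⁻ ω, (f ω : ℝ≥0∞) ∂(m z₀)))
    simpa only [hlint f] using this.tendsto z₀
  · intro x y
    set z : X × X := (x, y) with hz
    refine ⟨(Finset.univ.filter (fun i => cf i z ≠ 0)).image (fun i => p i z),
      le_trans (Finset.card_image_le) (le_trans (Finset.card_filter_le _ _) (by simp)), ?_, ?_⟩
    · intro φ hφ
      obtain ⟨i, hi, rfl⟩ := Finset.mem_image.mp hφ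
      have hiz : z ∈ U i := by
        have hρi : ρ i z ≠ 0 := by
          intro h; exact (Finset.mem_filter.mp hi).2 (by simp [hcf, h])
        exact hρ i (subset_tsupport _ hρi)
      rw [hpU i z hiz]
      exact ⟨hsec0 i ⟨z, hiz⟩, hsec1 i ⟨z, hiz⟩⟩
    · show m z _ = 0
      rw [hm, Measure.finset_sum_apply]
      refine Finset.sum_eq_zero fun i _ => ?_
      rw [Measure.smul_apply, smul_eq_mul]
      by_cases h0 : cf i z = 0
      · simp [h0]
      · have : p i z ∈ ((Finset.univ.filter (fun i => cf i z ≠ 0)).image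
            (fun i => p i z) : Finset (PathSp X)) :=
          Finset.mem_image.mpr ⟨i, Finset.mem_filter.mpr ⟨Finset.mem_univ _, h0⟩, rfl⟩
        rw [Measure.dirac_apply, Set.indicator_of_notMem (by simpa using this), mul_zero]
end

section
/- For a path-connected topological group X, dTC(X) = dcat(X). -/
open MeasureTheory unitInterval

section Aux

open Pointwise NNReal BoundedContinuousFunction
open scoped Classical

noncomputable section

instance instTopGroupPathSp (G : Type*) [TopologicalSpace G] [Group G] [IsTopologicalGroup G] :
    IsTopologicalGroup C(unitInterval, G) where
  continuous_mul := by
    let E : C((C(unitInterval,G) × C(unitInterval,G)) × unitInterval, G) :=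
      ⟨fun q => q.1.1 q.2 * q.1.2 q.2,
        ((ContinuousEval.continuous_eval.comp ((continuous_fst.comp continuous_fst).prodMk continuous_snd)).mul
         (ContinuousEval.continuous_eval.comp ((continuous_snd.comp continuous_fst).prodMk continuous_snd)))⟩
    have heq : (fun p : C(unitInterval,G) × C(unitInterval,G) => p.1 * p.2)
        = ⇑(ContinuousMap.curry E) := funext fun p => ContinuousMap.ext fun t => rfl
    rw [heq]
    exact (ContinuousMap.curry E).continuous
  continuous_inv := by
    have h : Continuous fun φ : C(unitInterval,G) =>
        (⟨Inv.inv, continuous_inv⟩ : C(G,G)).comp φ := ContinuousMap.continuous_postcomp _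
    have heq : (fun φ : C(unitInterval,G) => φ⁻¹)
        = fun φ : C(unitInterval,G) => (⟨Inv.inv, continuous_inv⟩ : C(G,G)).comp φ :=
      funext fun φ => ContinuousMap.ext fun t => rfl
    exact heq ▸ h

variable {Γ : Type*} [TopologicalSpace Γ] [Group Γ] [IsTopologicalGroup Γ]

/-- A bump function at the identity of a topological group. -/
theorem exists_bump_one {N : Set Γ} (hN : N ∈ nhds (1 : Γ)) :
    ∃ u : Γ → ℝ, Continuous u ∧ u 1 = 1 ∧ (∀ x, 0 ≤ u x) ∧ (∀ x, u x ≤ 1) ∧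
      ∀ x, x ∉ N → u x = 0 := by
  classical
  -- step: shrink a neighborhood of 1 to a symmetric one with cube inside
  have step : ∀ W : Set Γ, W ∈ nhds (1:Γ) →
      ∃ V : Set Γ, V ∈ nhds (1:Γ) ∧ (∀ x ∈ V, x⁻¹ ∈ V) ∧ V * V * V ⊆ W ∧ V ⊆ W := by
    intro W hW
    obtain ⟨V₁, hV₁o, hV₁1, hV₁⟩ := exists_open_nhds_one_mul_subset hW
    obtain ⟨V₂, hV₂o, hV₂1, hV₂⟩ := exists_open_nhds_one_mul_subset (hV₁o.mem_nhds hV₁1)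
    have hV₂V₁ : V₂ ⊆ V₁ := fun x hx => by simpa using hV₂ (Set.mul_mem_mul hx hV₂1)
    refine ⟨V₂ ∩ V₂⁻¹, ?_, ?_, ?_, ?_⟩
    · exact Filter.inter_mem (hV₂o.mem_nhds hV₂1)
        ((hV₂o.inv).mem_nhds (by simpa using hV₂1))
    · rintro x ⟨h1, h2⟩
      exact ⟨by simpa using h2, by simpa using h1⟩
    · intro x hx
      obtain ⟨a, ha, b, hb, rfl⟩ := hx
      obtain ⟨c, hc, d, hd, rfl⟩ := ha
      have h1 : c * d ∈ V₁ := hV₂ (Set.mul_mem_mul hc.1 hd.1)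
      have h2 : c * d * b ∈ V₁ * V₁ := Set.mul_mem_mul h1 (hV₂V₁ hb.1)
      exact hV₁ h2
    · intro x hx
      exact hV₁ (by simpa using Set.mul_mem_mul hV₁1 (hV₂V₁ hx.1))
  choose! V hV1 hV2 hV3 hV4 using step
  -- the sequence of neighborhoods
  let U : ℕ → Set Γ := fun n => Nat.rec (motive := fun _ => Set Γ) (V N) (fun _ W => V W) n
  have hUmem : ∀ n, U n ∈ nhds (1:Γ) := by
    intro n; induction n with
    | zero => exact hV1 N hN
    | succ n ih => exact hV1 _ ih
  have hU0 : U 0 ⊆ N := hV4 N hN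
  have hUsymm : ∀ n, ∀ x ∈ U n, x⁻¹ ∈ U n := by
    intro n; cases n with
    | zero => exact hV2 N hN
    | succ n => exact hV2 _ (hUmem n)
  have hUcube : ∀ n, U (n+1) * U (n+1) * U (n+1) ⊆ U n := fun n => hV3 _ (hUmem n)
  have hUone : ∀ n, (1:Γ) ∈ U n := fun n => mem_of_mem_nhds (hUmem n)
  have hUsucc : ∀ n, U (n+1) ⊆ U n := by
    intro n x hx
    exact hUcube n (by simpa using Set.mul_mem_mul (Set.mul_mem_mul (hUone (n+1)) (hUone (n+1))) hx)
  have hUanti : ∀ {m n : ℕ}, m ≤ n → U n ⊆ U m := by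
    intro m n h
    induction h with
    | refl => exact fun _ h => h
    | step h ih => exact fun x hx => ih (hUsucc _ hx)
  -- the premetric
  set d : Γ → Γ → ℝ≥0 := fun x y => ⨅ n : ℕ, (if x⁻¹ * y ∈ U n then ((2:ℝ≥0)⁻¹)^n else 1) with hd_def
  have d_le : ∀ x y n, x⁻¹ * y ∈ U n → d x y ≤ ((2:ℝ≥0)⁻¹)^n := by
    intro x y n h
    refine (ciInf_le (OrderBot.bddBelow _) n).trans ?_
    rw [if_pos h]
  have d_le_one : ∀ x y, d x y ≤ 1 := by
    intro x y
    refine (ciInf_le (OrderBot.bddBelow _) 0).trans ?_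
    split <;> simp
  have d_self : ∀ x, d x x = 0 := by
    intro x
    have h : ∀ n, d x x ≤ ((2:ℝ≥0)⁻¹)^n := fun n => d_le x x n (by simpa using hUone n)
    have htend : Filter.Tendsto (fun n : ℕ => ((2:ℝ≥0)⁻¹)^n) Filter.atTop (nhds 0) :=
      tendsto_pow_atTop_nhds_zero_of_lt_one (by rw [← NNReal.coe_lt_coe]; push_cast; norm_num)
    exact le_antisymm (ge_of_tendsto' htend h) bot_le
  have d_comm : ∀ x y, d x y = d y x := by
    intro x y
    have key : ∀ n (a b : Γ), (a⁻¹ * b ∈ U n) → (b⁻¹ * a ∈ U n) := by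
      intro n a b h
      have := hUsymm n _ h
      simpa [mul_inv_rev] using this
    simp only [hd_def]
    congr 1; funext n
    by_cases h : x⁻¹ * y ∈ U n
    · rw [if_pos h, if_pos (key n x y h)]
    · rw [if_neg h, if_neg (fun h' => h (key n y x h'))]
  have d_mem : ∀ (k : ℕ) (x y : Γ), d x y < ((2:ℝ≥0)⁻¹)^k → x⁻¹ * y ∈ U (k+1) := by
    intro k x y h
    obtain ⟨n, hn⟩ := exists_lt_of_ciInf_lt h
    by_cases hmem : x⁻¹ * y ∈ U n
    · rw [if_pos hmem] at hn
      have hkn : k < n := by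
        by_contra hc
        push_neg at hc
        exact absurd (pow_le_pow_right_of_le_one' (by rw [← NNReal.coe_le_coe]; push_cast; norm_num) hc) (not_le.mpr hn)
      exact hUanti hkn hmem
    · rw [if_neg hmem] at hn
      exact absurd (pow_le_one₀ zero_le (by norm_num) : ((2:ℝ≥0)⁻¹)^k ≤ 1) (not_le.mpr hn)
  have half_pos : (0:ℝ≥0) < 2⁻¹ := by rw [← NNReal.coe_lt_coe]; push_cast; norm_num
  have half_lt_one : ((2:ℝ≥0)⁻¹) < 1 := by rw [← NNReal.coe_lt_coe]; push_cast; norm_num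
  -- Frink chain condition
  have hfrink : ∀ x₁ x₂ x₃ x₄ : Γ,
      d x₁ x₄ ≤ 2 * max (d x₁ x₂) (max (d x₂ x₃) (d x₃ x₄)) := by
    intro x₁ x₂ x₃ x₄
    set M := max (d x₁ x₂) (max (d x₂ x₃) (d x₃ x₄)) with hM
    have hd12 : d x₁ x₂ ≤ M := le_max_left _ _
    have hd23 : d x₂ x₃ ≤ M := le_max_of_le_right (le_max_left _ _)
    have hd34 : d x₃ x₄ ≤ M := le_max_of_le_right (le_max_right _ _)
    have hchain : ∀ k : ℕ, M < ((2:ℝ≥0)⁻¹)^k → d x₁ x₄ ≤ ((2:ℝ≥0)⁻¹)^k := by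
      intro k hMk
      have h12 := d_mem k x₁ x₂ (lt_of_le_of_lt hd12 hMk)
      have h23 := d_mem k x₂ x₃ (lt_of_le_of_lt hd23 hMk)
      have h34 := d_mem k x₃ x₄ (lt_of_le_of_lt hd34 hMk)
      have hmem : x₁⁻¹ * x₄ ∈ U k := by
        have := hUcube k (Set.mul_mem_mul (Set.mul_mem_mul h12 h23) h34)
        simpa [mul_assoc] using this
      exact d_le _ _ k hmem
    rcases le_or_gt 1 (2 * M) with h | h
    · exact (d_le_one _ _).trans h
    · rcases eq_or_lt_of_le (zero_le : (0:ℝ≥0) ≤ M) with hM0 | hM0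
      · have hz : ∀ k : ℕ, d x₁ x₄ ≤ ((2:ℝ≥0)⁻¹)^k := fun k =>
          hchain k (by rw [← hM0]; exact pow_pos half_pos k)
        have htend : Filter.Tendsto (fun n : ℕ => ((2:ℝ≥0)⁻¹)^n) Filter.atTop (nhds 0) :=
          tendsto_pow_atTop_nhds_zero_of_lt_one half_lt_one
        have : d x₁ x₄ ≤ 0 := ge_of_tendsto' htend hz
        simpa using this.trans zero_le
      · -- 0 < M, and M < 2⁻¹ (since 2*M < 1)
        have hMhalf : M < 2⁻¹ := by
          by_contra hc
          push_neg at hc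
          have : (1:ℝ≥0) ≤ 2 * M := by
            calc (1:ℝ≥0) = 2 * 2⁻¹ := by rw [← NNReal.coe_inj]; push_cast; norm_num
            _ ≤ 2 * M := by exact mul_le_mul_right hc 2
          exact absurd this (not_le.mpr h)
        have hex : ∃ n : ℕ, ((2:ℝ≥0)⁻¹)^n ≤ M := by
          obtain ⟨n, hn⟩ := NNReal.exists_pow_lt_of_lt_one hM0 half_lt_one
          exact ⟨n, hn.le⟩
        set n₀ := Nat.find hex with hn₀
        have hn₀spec : ((2:ℝ≥0)⁻¹)^n₀ ≤ M := Nat.find_spec hex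
        have hn₀pos : 1 ≤ n₀ := by
          rcases Nat.eq_zero_or_pos n₀ with h0 | h1
          · exfalso
            rw [h0] at hn₀spec
            simp at hn₀spec
            exact absurd (hn₀spec.trans_lt (hMhalf.trans half_lt_one)) (lt_irrefl _)
          · exact h1
        have hklt : ¬ ((2:ℝ≥0)⁻¹)^(n₀ - 1) ≤ M := Nat.find_min hex (Nat.sub_lt hn₀pos Nat.one_pos)
        push_neg at hklt
        have hfin : d x₁ x₄ ≤ ((2:ℝ≥0)⁻¹)^(n₀-1) := hchain _ hklt
        refine hfin.trans ?_
        have h2inv : (2:ℝ≥0) * 2⁻¹ = 1 := mul_inv_cancel₀ two_ne_zero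
        have hn : n₀ - 1 + 1 = n₀ := Nat.succ_pred_eq_of_pos hn₀pos
        have hpow : ((2:ℝ≥0)⁻¹)^(n₀-1) = 2 * ((2:ℝ≥0)⁻¹)^n₀ := by
          conv_rhs => rw [← hn]
          rw [pow_succ', ← mul_assoc, h2inv, one_mul]
        rw [hpow]
        exact mul_le_mul_right hn₀spec 2
  -- the pseudometric
  let D := PseudoMetricSpace.ofPreNNDist d d_self d_comm
  let ρ : Γ → Γ → ℝ := fun x y => @dist Γ (@PseudoMetricSpace.toDist Γ D) x y
  have hρ_le : ∀ x y, ρ x y ≤ (d x y : ℝ) := fun x y =>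
    PseudoMetricSpace.dist_ofPreNNDist_le d d_self d_comm x y
  have hρ_frink : ∀ x y, (d x y : ℝ) ≤ 2 * ρ x y := fun x y =>
    PseudoMetricSpace.le_two_mul_dist_ofPreNNDist d d_self d_comm hfrink x y
  have hρ_nonneg : ∀ x y, 0 ≤ ρ x y := fun x y => @dist_nonneg Γ D x y
  have hρ_self : ∀ x, ρ x x = 0 := fun x => @dist_self Γ D x
  have hρ_comm : ∀ x y, ρ x y = ρ y x := fun x y => @dist_comm Γ D x y
  have hρ_tri : ∀ x y z, ρ x z ≤ ρ x y + ρ y z := fun x y z => @dist_triangle Γ D x y z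
  have hρcont : Continuous fun x => ρ 1 x := by
    rw [continuous_iff_continuousAt]
    intro x₀
    rw [ContinuousAt, Metric.tendsto_nhds]
    intro ε hε
    obtain ⟨n, hn⟩ : ∃ n : ℕ, ((1:ℝ)/2)^n < ε := exists_pow_lt_of_lt_one hε (by norm_num)
    have hnbh : {x : Γ | x₀⁻¹ * x ∈ U n} ∈ nhds x₀ := by
      have hc : ContinuousAt (fun x : Γ => x₀⁻¹ * x) x₀ := (continuous_mul_left x₀⁻¹).continuousAt
      exact hc.preimage_mem_nhds (by simpa using hUmem n)
    filter_upwards [hnbh] with x hx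
    have hdist : ρ x₀ x ≤ ((1:ℝ)/2)^n := by
      refine (hρ_le x₀ x).trans ?_
      have := d_le x₀ x n hx
      have hcoe : ((d x₀ x : ℝ≥0) : ℝ) ≤ ((((2:ℝ≥0)⁻¹)^n : ℝ≥0) : ℝ) := NNReal.coe_le_coe.mpr this
      refine hcoe.trans_eq ?_
      push_cast
      norm_num
    have habs : |ρ 1 x - ρ 1 x₀| ≤ ρ x₀ x := by
      rw [abs_sub_le_iff]
      constructor
      · have := hρ_tri 1 x₀ x; linarith
      · have := hρ_tri 1 x x₀; have hcomm := hρ_comm x x₀; linarith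
    rw [Real.dist_eq]
    exact lt_of_le_of_lt (habs.trans hdist) hn
  -- the bump function
  refine ⟨fun x => max 0 (1 - 4 * ρ 1 x), ?_, ?_, ?_, ?_, ?_⟩
  · exact continuous_const.max (continuous_const.sub (continuous_const.mul hρcont))
  · show max 0 (1 - 4 * ρ 1 1) = 1
    rw [hρ_self]; norm_num
  · intro x; exact le_max_left _ _
  · intro x
    show max 0 (1 - 4 * ρ 1 x) ≤ 1
    have := hρ_nonneg 1 x
    apply max_le <;> linarith
  · intro x hxN
    show max 0 (1 - 4 * ρ 1 x) = 0
    have hρx : (1:ℝ)/4 ≤ ρ 1 x := by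
      by_contra hc
      push_neg at hc
      have hd : (d 1 x : ℝ) < 1/2 := lt_of_le_of_lt (hρ_frink 1 x) (by linarith)
      have hdn : d 1 x < ((2:ℝ≥0)⁻¹)^1 := by
        rw [← NNReal.coe_lt_coe]
        push_cast
        norm_num
        linarith
      have hx2 := d_mem 1 1 x hdn
      exact hxN (hU0 (hUanti (by omega : 0 ≤ 2) (by simpa using hx2)))
    have hle : 1 - 4 * ρ 1 x ≤ 0 := by linarith
    exact max_eq_left hle


theorem exists_bump_at {s : Γ} {V : Set Γ} (hV : V ∈ nhds s) :
    ∃ u : Γ → ℝ, Continuous u ∧ u s = 1 ∧ (∀ x, 0 ≤ u x) ∧ (∀ x, u x ≤ 1) ∧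
      ∀ x, x ∉ V → u x = 0 := by
  have hN : (fun g : Γ => s * g) ⁻¹' V ∈ nhds (1 : Γ) :=
    (continuous_mul_left s).continuousAt.preimage_mem_nhds (by simpa using hV)
  obtain ⟨u, hu, hu1, hu0, hub, husupp⟩ := exists_bump_one hN
  refine ⟨fun x => u (s⁻¹ * x), hu.comp (continuous_mul_left s⁻¹), by simpa using hu1,
    fun x => hu0 _, fun x => hub _, ?_⟩
  intro x hx
  refine husupp _ fun hc => hx ?_
  simpa using hc

variable [MeasurableSpace Γ] [BorelSpace Γ]

/-- Translation of a probability measure by a group element. -/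
noncomputable def transMap (γ : Γ) (μ : ProbabilityMeasure Γ) : ProbabilityMeasure Γ :=
  μ.map (f := fun ξ => γ * ξ) ((continuous_mul_left γ).measurable.aemeasurable)

theorem continuousAt_transMap {γ₀ : Γ} {μ₀ : ProbabilityMeasure Γ} (S : Finset Γ)
    (hS : (μ₀ : Measure Γ) ((↑S : Set Γ)ᶜ) = 0) :
    ContinuousAt (fun p : Γ × ProbabilityMeasure Γ => transMap p.1 p.2) (γ₀, μ₀) := by
  classical
  have key : ∀ (γ : Γ) (μ : ProbabilityMeasure Γ) (f : Γ →ᵇ ℝ),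
      ∫ ω, f ω ∂((transMap γ μ) : Measure Γ) = ∫ ξ, f (γ * ξ) ∂(μ : Measure Γ) := by
    intro γ μ f
    rw [transMap, ProbabilityMeasure.toMeasure_map]
    exact integral_map ((continuous_mul_left γ).measurable.aemeasurable)
      f.continuous.aestronglyMeasurable
  rw [ContinuousAt, ProbabilityMeasure.tendsto_iff_forall_integral_tendsto]
  intro f
  simp only [key]
  rw [Metric.tendsto_nhds]
  intro ε hε
  set B := ‖f‖ with hB
  have hB0 : 0 ≤ B := norm_nonneg f
  set δ := ε / (3 + 2*B) with hδ
  have hδpos : 0 < δ := div_pos hε (by linarith)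
  -- bump data around each point of S
  have hb : ∀ s : Γ, ∃ (u : Γ → ℝ) (W : Set Γ), Continuous u ∧ u s = 1 ∧ (∀ x, 0 ≤ u x) ∧
      (∀ x, u x ≤ 1) ∧ W ∈ nhds γ₀ ∧
      ∀ γ ∈ W, ∀ ξ : Γ, u ξ ≠ 0 → |f (γ * ξ) - f (γ₀ * ξ)| ≤ δ := by
    intro s
    have hcont : Continuous fun q : Γ × Γ => |f (q.1 * q.2) - f (γ₀ * s)| :=
      ((f.continuous.comp (continuous_fst.mul continuous_snd)).sub continuous_const).abs
    have hopen : IsOpen {q : Γ × Γ | |f (q.1 * q.2) - f (γ₀ * s)| < δ/2} :=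
      isOpen_lt hcont continuous_const
    have hmem : (γ₀, s) ∈ {q : Γ × Γ | |f (q.1 * q.2) - f (γ₀ * s)| < δ/2} := by
      simp only [Set.mem_setOf_eq, sub_self, abs_zero]
      linarith
    obtain ⟨W', V', hW'o, hV'o, hγ₀W', hsV', hWV⟩ := isOpen_prod_iff.mp hopen γ₀ s hmem
    obtain ⟨u, hu, hus, hu0, hu1, husupp⟩ := exists_bump_at (hV'o.mem_nhds hsV')
    refine ⟨u, W', hu, hus, hu0, hu1, hW'o.mem_nhds hγ₀W', ?_⟩
    intro γ hγ ξ hξ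
    have hξV : ξ ∈ V' := by
      by_contra hc
      exact hξ (husupp ξ hc)
    have h1 : |f (γ * ξ) - f (γ₀ * s)| < δ/2 := hWV (Set.mk_mem_prod hγ hξV)
    have h2 : |f (γ₀ * ξ) - f (γ₀ * s)| < δ/2 := hWV (Set.mk_mem_prod hγ₀W' hξV)
    calc |f (γ*ξ) - f (γ₀*ξ)| ≤ |f (γ*ξ) - f (γ₀*s)| + |f (γ₀*s) - f (γ₀*ξ)| :=
          abs_sub_le _ _ _
      _ ≤ δ := by
          rw [abs_sub_comm (f (γ₀*s))]
          linarith
  choose u W hu hus hu0 hu1 hW hprop using hb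
  set W₀ := ⋂ s ∈ S, W s with hW₀
  have hW₀mem : W₀ ∈ nhds γ₀ := (Filter.biInter_finset_mem S).mpr fun s _ => hW s
  -- the cutoff function χ
  set χ : Γ → ℝ := fun ξ => max 0 (1 - ∑ s ∈ S, u s ξ) with hχdef
  have hχcont : Continuous χ :=
    continuous_const.max (continuous_const.sub (continuous_finset_sum S fun s _ => hu s))
  have hχ0 : ∀ ξ, 0 ≤ χ ξ := fun ξ => le_max_left _ _
  have hχ1 : ∀ ξ, χ ξ ≤ 1 := by
    intro ξ
    have hsum : 0 ≤ ∑ s ∈ S, u s ξ := Finset.sum_nonneg fun s _ => hu0 s ξ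
    apply max_le <;> linarith
  have hχS : ∀ s ∈ S, χ s = 0 := by
    intro s hs
    have hsum : (1:ℝ) ≤ ∑ t ∈ S, u t s := by
      have h := Finset.single_le_sum (f := fun t => u t s) (fun t _ => hu0 t s) hs
      simpa [hus s] using h
    show max 0 (1 - ∑ t ∈ S, u t s) = 0
    exact max_eq_left (by linarith)
  have hχbad : ∀ ξ : Γ, (∀ s ∈ S, u s ξ = 0) → χ ξ = 1 := by
    intro ξ h
    show max 0 (1 - ∑ s ∈ S, u s ξ) = 1
    rw [Finset.sum_eq_zero h]
    norm_num
  let χb : Γ →ᵇ ℝ := BoundedContinuousFunction.ofNormedAddCommGroup χ hχcont 1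
    (fun ξ => by rw [Real.norm_eq_abs, abs_of_nonneg (hχ0 ξ)]; exact hχ1 ξ)
  have hχb : ∀ ξ, χb ξ = χ ξ := fun ξ => rfl
  -- μ₀-integral of χ is zero
  have hχint0 : ∫ ξ, χ ξ ∂(μ₀ : Measure Γ) = 0 := by
    have hsub : {ξ : Γ | ¬ χ ξ = 0} ⊆ ((↑S : Set Γ)ᶜ) := by
      intro ξ hξ
      simp only [Set.mem_setOf_eq] at hξ
      intro hmem
      exact hξ (hχS ξ hmem)
    have hae : ∀ᵐ ξ ∂(μ₀ : Measure Γ), χ ξ = 0 := by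
      rw [ae_iff]
      exact measure_mono_null hsub hS
    rw [integral_congr_ae (g := fun _ => (0:ℝ)) hae, integral_zero]
  have hsnd : Filter.Tendsto Prod.snd (nhds (γ₀, μ₀)) (nhds μ₀) := continuousAt_snd
  -- eventualities
  have ev1 : ∀ᶠ p : Γ × ProbabilityMeasure Γ in nhds (γ₀, μ₀), p.1 ∈ W₀ :=
    continuousAt_fst.preimage_mem_nhds hW₀mem
  have ev2' := ProbabilityMeasure.tendsto_iff_forall_integral_tendsto.mp hsnd χb
  have ev2 : ∀ᶠ p : Γ × ProbabilityMeasure Γ in nhds (γ₀, μ₀),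
      dist (∫ ξ, χ ξ ∂((p.2 : Measure Γ))) 0 < δ := by
    have h0 : ∫ ω, χb ω ∂(μ₀ : Measure Γ) = 0 := hχint0
    rw [h0] at ev2'
    exact Metric.tendsto_nhds.mp ev2' δ hδpos
  set f₀ : Γ →ᵇ ℝ := f.compContinuous ⟨fun ξ => γ₀ * ξ, continuous_mul_left γ₀⟩ with hf₀
  have ev3' := ProbabilityMeasure.tendsto_iff_forall_integral_tendsto.mp hsnd f₀
  have ev3 : ∀ᶠ p : Γ × ProbabilityMeasure Γ in nhds (γ₀, μ₀),
      dist (∫ ξ, f (γ₀ * ξ) ∂((p.2 : Measure Γ))) (∫ ξ, f (γ₀ * ξ) ∂(μ₀ : Measure Γ)) < δ :=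
    Metric.tendsto_nhds.mp ev3' δ hδpos
  filter_upwards [ev1, ev2, ev3] with p hp1 hp2 hp3
  set γ := p.1
  set μ := p.2
  haveI : IsProbabilityMeasure (μ : Measure Γ) := μ.2
  -- integrability
  have hint1 : Integrable (fun ξ => f (γ * ξ)) (μ : Measure Γ) :=
    (f.compContinuous ⟨fun ξ => γ * ξ, continuous_mul_left γ⟩).integrable _
  have hint2 : Integrable (fun ξ => f (γ₀ * ξ)) (μ : Measure Γ) :=
    (f.compContinuous ⟨fun ξ => γ₀ * ξ, continuous_mul_left γ₀⟩).integrable _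
  have hintχ : Integrable χ (μ : Measure Γ) := χb.integrable _
  -- pointwise bound
  have hpt : ∀ ξ : Γ, |f (γ * ξ) - f (γ₀ * ξ)| ≤ δ + (2*B) * χ ξ := by
    intro ξ
    by_cases hcase : ∀ s ∈ S, u s ξ = 0
    · rw [hχbad ξ hcase]
      have h1 : ‖f (γ * ξ)‖ ≤ B := f.norm_coe_le_norm _
      have h2 : ‖f (γ₀ * ξ)‖ ≤ B := f.norm_coe_le_norm _
      have h3 : |f (γ * ξ) - f (γ₀ * ξ)| ≤ ‖f (γ * ξ)‖ + ‖f (γ₀ * ξ)‖ := by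
        rw [← Real.norm_eq_abs]
        exact norm_sub_le _ _
      linarith
    · push_neg at hcase
      obtain ⟨s, hsS, hsne⟩ := hcase
      have hγW : γ ∈ W s := by
        have := hp1
        rw [hW₀, Set.mem_iInter₂] at this
        exact this s hsS
      have hle := hprop s γ hγW ξ hsne
      have hχnn : 0 ≤ (2*B) * χ ξ := mul_nonneg (by linarith) (hχ0 ξ)
      linarith
  -- A-term bound
  have hA : |(∫ ξ, f (γ * ξ) ∂(μ : Measure Γ)) - ∫ ξ, f (γ₀ * ξ) ∂(μ : Measure Γ)|
      ≤ δ + (2*B) * ∫ ξ, χ ξ ∂(μ : Measure Γ) := by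
    rw [← integral_sub hint1 hint2]
    have h1 : |∫ ξ, (f (γ * ξ) - f (γ₀ * ξ)) ∂(μ : Measure Γ)|
        ≤ ∫ ξ, |f (γ * ξ) - f (γ₀ * ξ)| ∂(μ : Measure Γ) := by
      rw [← Real.norm_eq_abs]
      exact (norm_integral_le_integral_norm _).trans (le_of_eq (by simp [Real.norm_eq_abs]))
    refine h1.trans ?_
    have h2 : ∫ ξ, |f (γ * ξ) - f (γ₀ * ξ)| ∂(μ : Measure Γ)
        ≤ ∫ ξ, (δ + (2*B) * χ ξ) ∂(μ : Measure Γ) := by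
      refine integral_mono (hint1.sub hint2).abs ?_ hpt
      exact (integrable_const δ).add (hintχ.const_mul (2*B))
    refine h2.trans (le_of_eq ?_)
    have hmulint : ∫ a, 2*B*χ a ∂(μ:Measure Γ) = 2*B * ∫ a, χ a ∂(μ:Measure Γ) :=
      integral_smul (2*B) χ
    rw [integral_add (integrable_const δ) (hintχ.const_mul (2*B)), integral_const, hmulint]
    simp [measure_univ]
  -- conclude
  have hχle : ∫ ξ, χ ξ ∂(μ : Measure Γ) ≤ δ := by
    have := hp2
    rw [Real.dist_eq, sub_zero] at this
    exact (le_abs_self _).trans this.le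
  have hχnn : 0 ≤ ∫ ξ, χ ξ ∂(μ : Measure Γ) := integral_nonneg hχ0
  have hBterm : |(∫ ξ, f (γ₀ * ξ) ∂(μ : Measure Γ)) - ∫ ξ, f (γ₀ * ξ) ∂(μ₀ : Measure Γ)| < δ := by
    rw [Real.dist_eq] at hp3
    exact hp3
  rw [Real.dist_eq]
  have htri : |(∫ ξ, f (γ * ξ) ∂(μ : Measure Γ)) - ∫ ξ, f (γ₀ * ξ) ∂(μ₀ : Measure Γ)|
      ≤ |(∫ ξ, f (γ * ξ) ∂(μ : Measure Γ)) - ∫ ξ, f (γ₀ * ξ) ∂(μ : Measure Γ)|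
        + |(∫ ξ, f (γ₀ * ξ) ∂(μ : Measure Γ)) - ∫ ξ, f (γ₀ * ξ) ∂(μ₀ : Measure Γ)| :=
    abs_sub_le _ _ _
  have hδε : δ * (3 + 2*B) = ε := div_mul_cancel₀ ε (by linarith)
  have hmul : (2*B) * ∫ ξ, χ ξ ∂(μ : Measure Γ) ≤ (2*B) * δ :=
    mul_le_mul_of_nonneg_left hχle (by linarith)
  nlinarith [htri, hA, hBterm, hδpos, hB0]

end

end Aux

/-- For a path-connected topological group, `dTC G = dcat G`. -/
theorem dTC_eq_dcat_of_topologicalGroup (G : Type) [TopologicalSpace G] [Group G]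
    [IsTopologicalGroup G] [PathConnectedSpace G] :
    dTC G = dcat G := by
  classical
  have main : ∀ n : ℕ,
      (∃ s : C(G × G, ProbabilityMeasure (PathSp G)), ∀ x y, DistPaths (n+1) x y (s (x,y))) ↔
      (∃ (x0 : G) (H : C(G, ProbabilityMeasure (PathSp G))), ∀ x, DistPaths (n+1) x x0 (H x)) := by
    intro n
    constructor
    · rintro ⟨s, hs⟩
      exact ⟨1, s.comp ⟨fun x => (x, 1), continuous_id.prodMk continuous_const⟩,
        fun x => hs x 1⟩
    · rintro ⟨x0, H, hH⟩
      let ι : G → PathSp G := fun g => ContinuousMap.const unitInterval g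
      have hι : Continuous ι := ContinuousMap.continuous_const'
      let c : G × G → PathSp G := fun p => ι (p.2 * x0⁻¹)
      have hc : Continuous c := hι.comp (continuous_snd.mul continuous_const)
      let z : G × G → G := fun p => x0 * p.2⁻¹ * p.1
      have hz : Continuous z := (continuous_const.mul continuous_snd.inv).mul continuous_fst
      let F : G × G → ProbabilityMeasure (PathSp G) := fun p => transMap (c p) (H (z p))
      have hF : Continuous F := by
        rw [continuous_iff_continuousAt]
        intro p
        obtain ⟨S, hScard, hSends, hSnull⟩ := hH (z p)
        have houter := continuousAt_transMap (Γ := PathSp G) (γ₀ := c p) (μ₀ := H (z p)) S hSnull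
        have hinner : ContinuousAt (fun q : G × G => (c q, H (z q))) p :=
          (hc.continuousAt).prodMk ((H.continuous.comp hz).continuousAt)
        exact ContinuousAt.comp (f := fun q : G × G => (c q, H (z q)))
          (g := fun q : PathSp G × ProbabilityMeasure (PathSp G) => transMap q.1 q.2)
          houter hinner
      refine ⟨⟨F, hF⟩, ?_⟩
      intro x y
      obtain ⟨S, hScard, hSends, hSnull⟩ := hH (z (x,y))
      refine ⟨S.image (fun ψ => c (x,y) * ψ), (Finset.card_image_le).trans hScard, ?_, ?_⟩
      · intro φ hφ
        rw [Finset.mem_image] at hφ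
        obtain ⟨ψ, hψ, rfl⟩ := hφ
        obtain ⟨he0, he1⟩ := hSends ψ hψ
        constructor
        · show (c (x,y) * ψ) 0 = x
          rw [ContinuousMap.mul_apply]
          show (y * x0⁻¹) * ψ 0 = x
          rw [he0]
          show y * x0⁻¹ * (x0 * y⁻¹ * x) = x
          group
        · show (c (x,y) * ψ) 1 = y
          rw [ContinuousMap.mul_apply]
          show (y * x0⁻¹) * ψ 1 = y
          rw [he1]
          show y * x0⁻¹ * x0 = y
          group
      · show ((transMap (c (x,y)) (H (z (x,y)))) : Measure (PathSp G))
          ((↑(S.image (fun ψ => c (x,y) * ψ)) : Set (PathSp G))ᶜ) = 0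
        rw [transMap, ProbabilityMeasure.toMeasure_map]
        set e : PathSp G ≃ₜ PathSp G := Homeomorph.mulLeft (c (x,y)) with he
        have hfun : (fun ξ : PathSp G => c (x,y) * ξ) = ⇑(e.toMeasurableEquiv) := by
          funext ξ
          simp [he]
        rw [hfun, MeasurableEquiv.map_apply]
        refine measure_mono_null ?_ hSnull
        intro ξ hξ
        intro hmem
        apply hξ
        show e.toMeasurableEquiv ξ ∈ (↑(S.image (fun ψ => c (x,y) * ψ)) : Set (PathSp G))
        have : e.toMeasurableEquiv ξ = c (x,y) * ξ := by simp [he]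
        rw [this]
        exact Finset.mem_coe.mpr (Finset.mem_image.mpr ⟨ξ, hmem, rfl⟩)
  unfold dTC dcat
  congr 1
  ext cv
  simp only [Set.mem_setOf_eq]
  constructor
  · rintro ⟨n, rfl, s, hs⟩
    obtain ⟨x0, H, hH⟩ := (main n).1 ⟨s, hs⟩
    exact ⟨n, rfl, x0, H, hH⟩
  · rintro ⟨n, rfl, x0, H, hH⟩
    obtain ⟨s, hs⟩ := (main n).2 ⟨x0, H, hH⟩
    exact ⟨n, rfl, s, hs⟩
end
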